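/- arXiv:1405.6157 — 12 statements merged into one kernel-verified Lean document; each statement's English description precedes it below -/
import Mathlib

section
/- Let (P,G,B) be a transversal design TD(2,α) with α > 2, and let 1 ≤ k ≤ 2α. Then the minimum, taken over all k-element subsets S of the point set P, of the number of blocks of B that contain at least one point of S, equals kα − ⌊k²/4⌋. -/
/-- A transversal design `TD(ℓ, h)`: `Gr` is a partition of the point set `P`
(of size `ℓh`) into `ℓ` groups of size `h`; `B` is a collection of blocks,
each an `ℓ`-subset of `P` meeting every group in exactly one point, such that
any pair of points from different groups lies in exactly one block. -/
structure IsTransversalDesign {P : Type*} [Fintype P] [DecidableEq P]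
    (ℓ h : ℕ) (Gr : Finset (Finset P)) (B : Finset (Finset P)) : Prop where
  card_points : Fintype.card P = ℓ * h
  card_groups : Gr.card = ℓ
  group_card : ∀ g ∈ Gr, g.card = h
  groups_disjoint : ∀ g₁ ∈ Gr, ∀ g₂ ∈ Gr, g₁ ≠ g₂ → Disjoint g₁ g₂
  groups_cover : ∀ p : P, ∃ g ∈ Gr, p ∈ g
  block_card : ∀ b ∈ B, b.card = ℓ
  block_meets_group : ∀ b ∈ B, ∀ g ∈ Gr, (b ∩ g).card = 1
  pairs_covered : ∀ p q : P, ∀ g₁ ∈ Gr, ∀ g₂ ∈ Gr, g₁ ≠ g₂ → p ∈ g₁ → q ∈ g₂ →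
    ∃! b, b ∈ B ∧ p ∈ b ∧ q ∈ b

lemma td2_aux1 (X Y Z W m : ℕ) (h1 : X + Z = W + Y) (h2 : Y ≤ m) (h3 : X ≤ W) :
    Z - m ≤ W - X := by omega

lemma td2_aux2 (X Y Z W : ℕ) (h1 : X + Z = W + Y) (h2 : Y ≤ Z) (h3 : X ≤ W) :
    Z - Y = W - X := by omega

lemma td2_half (k : ℕ) : (k / 2) * (k - k / 2) = k ^ 2 / 4 := by
  obtain ⟨t, rfl | rfl⟩ := Nat.even_or_odd' k
  · have h1 : 2 * t / 2 = t := by omega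
    have h3 : 2 * t - t = t := by omega
    have h2 : (2 * t) ^ 2 = (t * t) * 4 := by ring
    rw [h1, h3, h2, Nat.mul_div_cancel _ (by norm_num)]
  · have h1 : (2 * t + 1) / 2 = t := by omega
    have h3 : 2 * t + 1 - t = t + 1 := by omega
    have h2 : (2 * t + 1) ^ 2 = (t * (t + 1)) * 4 + 1 := by ring
    rw [h1, h3, h2]
    generalize t * (t + 1) = m
    omega

/-- For a `TD(2,α)` with `α > 2` and `1 ≤ k ≤ 2α`, the minimum over all
`k`-subsets `S` of points of the number of blocks meeting `S`
equals `kα - ⌊k²/4⌋`. -/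
theorem td2_min_file_size {P : Type*} [Fintype P] [DecidableEq P]
    (α : ℕ) (hα : 2 < α) (Gr B : Finset (Finset P))
    (hTD : IsTransversalDesign 2 α Gr B)
    (k : ℕ) (hk1 : 1 ≤ k) (hk2 : k ≤ 2 * α) :
    IsLeast {m : ℕ | ∃ S : Finset P, S.card = k ∧
        m = (B.filter (fun b => ∃ p ∈ S, p ∈ b)).card}
      (k * α - k ^ 2 / 4) := by
  classical
  obtain ⟨g1, g2, hgne, hGr⟩ := Finset.card_eq_two.mp hTD.card_groups
  have hg1 : g1 ∈ Gr := by rw [hGr]; simp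
  have hg2 : g2 ∈ Gr := by rw [hGr]; simp
  have hg1c : g1.card = α := hTD.group_card g1 hg1
  have hg2c : g2.card = α := hTD.group_card g2 hg2
  have hdisj : Disjoint g1 g2 := hTD.groups_disjoint g1 hg1 g2 hg2 hgne
  have huniv : g1 ∪ g2 = Finset.univ := by
    apply Finset.eq_univ_of_forall
    intro p
    obtain ⟨g, hg, hpg⟩ := hTD.groups_cover p
    rw [hGr] at hg
    simp only [Finset.mem_insert, Finset.mem_singleton] at hg
    rcases hg with rfl | rfl <;> simp [Finset.mem_union, hpg]
  have hblk : ∀ x ∈ g1, ∀ y ∈ g2, ∃! b, b ∈ B ∧ x ∈ b ∧ y ∈ b :=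
    fun x hx y hy => hTD.pairs_covered x y g1 hg1 g2 hg2 hgne hx hy
  have hsing : ∀ b ∈ B, ∀ g ∈ Gr, ∀ x, x ∈ b → x ∈ g → b ∩ g = {x} := by
    intro b hb g hg x hxb hxg
    have hc := hTD.block_meets_group b hb g hg
    obtain ⟨a, ha⟩ := Finset.card_eq_one.mp hc
    have hx : x ∈ b ∩ g := Finset.mem_inter.mpr ⟨hxb, hxg⟩
    rw [ha] at hx ⊢
    simp only [Finset.mem_singleton] at hx
    rw [hx]
  have hstruct : ∀ b ∈ B, ∀ x, x ∈ b → x ∈ g1 → ∀ y, y ∈ b → y ∈ g2 → b = {x, y} := by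
    intro b hb x hxb hxg y hyb hyg
    have h1 := hsing b hb g1 hg1 x hxb hxg
    have h2 := hsing b hb g2 hg2 y hyb hyg
    have hbu : b = b ∩ (g1 ∪ g2) := by rw [huniv, Finset.inter_univ]
    rw [hbu, Finset.inter_union_distrib_left, h1, h2]
    ext z; simp
  -- counting: blocks avoiding S are in bijection with (g1 \ S) × (g2 \ S)
  have hneg : ∀ S : Finset P,
      (B.filter fun b => ∀ p ∈ S, p ∉ b).card = (g1 \ S).card * (g2 \ S).card := by
    intro S
    rw [← Finset.card_product]
    refine (Finset.card_bij
      (fun xy hxy => (hblk xy.1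
        (Finset.mem_sdiff.mp (Finset.mem_product.mp hxy).1).1 xy.2
        (Finset.mem_sdiff.mp (Finset.mem_product.mp hxy).2).1).choose)
      ?_ ?_ ?_).symm
    · intro xy hxy
      obtain ⟨hx1, hx1S⟩ := Finset.mem_sdiff.mp (Finset.mem_product.mp hxy).1
      obtain ⟨hx2, hx2S⟩ := Finset.mem_sdiff.mp (Finset.mem_product.mp hxy).2
      have hs := (hblk xy.1 hx1 xy.2 hx2).choose_spec
      obtain ⟨⟨hbB, hxb, hyb⟩, -⟩ := hs
      refine Finset.mem_filter.mpr ⟨hbB, ?_⟩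
      intro p hpS hpb
      have hstb := hstruct _ hbB xy.1 hxb hx1 xy.2 hyb hx2
      have hpb' : p ∈ ({xy.1, xy.2} : Finset P) := hstb ▸ hpb
      simp only [Finset.mem_insert, Finset.mem_singleton] at hpb'
      rcases hpb' with rfl | rfl
      · exact hx1S hpS
      · exact hx2S hpS
    · intro a ha a' ha' heq
      obtain ⟨ha1, -⟩ := Finset.mem_sdiff.mp (Finset.mem_product.mp ha).1
      obtain ⟨ha2, -⟩ := Finset.mem_sdiff.mp (Finset.mem_product.mp ha).2
      obtain ⟨ha1', -⟩ := Finset.mem_sdiff.mp (Finset.mem_product.mp ha').1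
      obtain ⟨ha2', -⟩ := Finset.mem_sdiff.mp (Finset.mem_product.mp ha').2
      obtain ⟨⟨hbB, hxb, hyb⟩, -⟩ := (hblk a.1 ha1 a.2 ha2).choose_spec
      obtain ⟨⟨hbB', hxb', hyb'⟩, -⟩ := (hblk a'.1 ha1' a'.2 ha2').choose_spec
      have heq' : (hblk a.1 ha1 a.2 ha2).choose = (hblk a'.1 ha1' a'.2 ha2').choose := heq
      rw [heq'] at hxb hyb
      have e1 := hsing _ hbB' g1 hg1 a.1 hxb ha1
      have e1' := hsing _ hbB' g1 hg1 a'.1 hxb' ha1'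
      have e2 := hsing _ hbB' g2 hg2 a.2 hyb ha2
      have e2' := hsing _ hbB' g2 hg2 a'.2 hyb' ha2'
      have : a.1 = a'.1 := by
        have := e1.symm.trans e1'
        exact Finset.singleton_injective this
      have h2 : a.2 = a'.2 := by
        have := e2.symm.trans e2'
        exact Finset.singleton_injective this
      exact Prod.ext this h2
    · intro b hb
      obtain ⟨hbB, hbS⟩ := Finset.mem_filter.mp hb
      obtain ⟨x, hx⟩ := Finset.card_eq_one.mp (hTD.block_meets_group b hbB g1 hg1)
      obtain ⟨y, hy⟩ := Finset.card_eq_one.mp (hTD.block_meets_group b hbB g2 hg2)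
      have hxm : x ∈ b ∩ g1 := by rw [hx]; simp
      have hym : y ∈ b ∩ g2 := by rw [hy]; simp
      obtain ⟨hxb, hxg⟩ := Finset.mem_inter.mp hxm
      obtain ⟨hyb, hyg⟩ := Finset.mem_inter.mp hym
      have hxS : x ∉ S := fun h => hbS x h hxb
      have hyS : y ∉ S := fun h => hbS y h hyb
      have hmem : (x, y) ∈ (g1 \ S) ×ˢ (g2 \ S) := by
        refine Finset.mem_product.mpr ⟨Finset.mem_sdiff.mpr ⟨hxg, hxS⟩,
          Finset.mem_sdiff.mpr ⟨hyg, hyS⟩⟩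
      refine ⟨(x, y), hmem, ?_⟩
      obtain ⟨-, huniq⟩ := (hblk x hxg y hyg).choose_spec
      exact (huniq b ⟨hbB, hxb, hyb⟩).symm
  have hBcard : B.card = α * α := by
    have h := hneg ∅
    simpa [hg1c, hg2c] using h
  have hpos : ∀ S : Finset P, (B.filter (fun b => ∃ p ∈ S, p ∈ b)).card =
      α * α - (g1 \ S).card * (g2 \ S).card := by
    intro S
    have hsplit := Finset.card_filter_add_card_filter_not
      (s := B) (p := fun b => ∃ p ∈ S, p ∈ b)
    have heqf : B.filter (fun b => ¬ ∃ p ∈ S, p ∈ b) =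
        B.filter (fun b => ∀ p ∈ S, p ∉ b) := by
      apply Finset.filter_congr
      intro b _
      push_neg
      rfl
    rw [heqf, hneg S, hBcard] at hsplit
    omega
  have hsd1 : ∀ S : Finset P, (g1 \ S).card = α - (S ∩ g1).card := by
    intro S
    have : g1 \ S = g1 \ (S ∩ g1) := by ext z; simp
    rw [this, Finset.card_sdiff_of_subset Finset.inter_subset_right, hg1c]
  have hsd2 : ∀ S : Finset P, (g2 \ S).card = α - (S ∩ g2).card := by
    intro S
    have : g2 \ S = g2 \ (S ∩ g2) := by ext z; simp
    rw [this, Finset.card_sdiff_of_subset Finset.inter_subset_right, hg2c]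
  have hsum : ∀ S : Finset P, (S ∩ g1).card + (S ∩ g2).card = S.card := by
    intro S
    have hu : (S ∩ g1) ∪ (S ∩ g2) = S := by
      rw [← Finset.inter_union_distrib_left, huniv, Finset.inter_univ]
    have hd : Disjoint (S ∩ g1) (S ∩ g2) :=
      hdisj.mono Finset.inter_subset_right Finset.inter_subset_right
    rw [← Finset.card_union_of_disjoint hd, hu]
  constructor
  · -- membership: the minimum is attained
    obtain ⟨a0, b0, ha0k, ha0, hb0, hY⟩ :
        ∃ a0 b0, a0 + b0 = k ∧ a0 ≤ α ∧ b0 ≤ α ∧ a0 * b0 = k ^ 2 / 4 :=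
      ⟨k / 2, k - k / 2, by omega, by omega, by omega, td2_half k⟩
    obtain ⟨T1, hT1s, hT1c⟩ := Finset.exists_subset_card_eq (show a0 ≤ g1.card by omega)
    obtain ⟨T2, hT2s, hT2c⟩ := Finset.exists_subset_card_eq (show b0 ≤ g2.card by omega)
    have hdT : Disjoint T1 T2 := hdisj.mono hT1s hT2s
    have hScard : (T1 ∪ T2).card = k := by
      rw [Finset.card_union_of_disjoint hdT, hT1c, hT2c, ha0k]
    have hi1 : (T1 ∪ T2) ∩ g1 = T1 := by
      apply Finset.Subset.antisymm
      · intro z hz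
        obtain ⟨hzS, hzg⟩ := Finset.mem_inter.mp hz
        rcases Finset.mem_union.mp hzS with h | h
        · exact h
        · exact absurd hzg (Finset.disjoint_right.mp hdisj (hT2s h))
      · intro z hz
        exact Finset.mem_inter.mpr ⟨Finset.mem_union_left _ hz, hT1s hz⟩
    have hi2 : (T1 ∪ T2) ∩ g2 = T2 := by
      apply Finset.Subset.antisymm
      · intro z hz
        obtain ⟨hzS, hzg⟩ := Finset.mem_inter.mp hz
        rcases Finset.mem_union.mp hzS with h | h
        · exact absurd hzg (Finset.disjoint_left.mp hdisj (hT1s h))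
        · exact h
      · intro z hz
        exact Finset.mem_inter.mpr ⟨Finset.mem_union_right _ hz, hT2s hz⟩
    refine ⟨T1 ∪ T2, hScard, ?_⟩
    rw [hpos (T1 ∪ T2), hsd1 (T1 ∪ T2), hsd2 (T1 ∪ T2), hi1, hi2, hT1c, hT2c]
    rw [← hY]
    refine td2_aux2 ((α - a0) * (α - b0)) (a0 * b0) (k * α) (α * α) ?_ ?_ ?_
    · zify [ha0, hb0]
      have hkz : (k : ℤ) = (a0 : ℤ) + (b0 : ℤ) := by exact_mod_cast ha0k.symm
      rw [hkz]
      ring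
    · calc a0 * b0 ≤ α * k := Nat.mul_le_mul ha0 (by omega)
        _ = k * α := Nat.mul_comm _ _
    · exact Nat.mul_le_mul (Nat.sub_le _ _) (Nat.sub_le _ _)
  · -- lower bound
    rintro m ⟨S, hScard, rfl⟩
    set a := (S ∩ g1).card with had
    set b := (S ∩ g2).card with hbd
    have hab : a + b = k := by rw [had, hbd, hsum S, hScard]
    have haα : a ≤ α := by
      rw [had, ← hg1c]
      exact Finset.card_le_card Finset.inter_subset_right
    have hbα : b ≤ α := by
      rw [hbd, ← hg2c]
      exact Finset.card_le_card Finset.inter_subset_right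
    rw [hpos S, hsd1 S, hsd2 S, ← had, ← hbd]
    refine td2_aux1 ((α - a) * (α - b)) (a * b) (k * α) (α * α) (k ^ 2 / 4) ?_ ?_ ?_
    · zify [haα, hbα]
      have : (k : ℤ) = (a : ℤ) + (b : ℤ) := by exact_mod_cast hab.symm
      rw [this]
      ring
    · rw [Nat.le_div_iff_mul_le (by norm_num)]
      have hk2' : k ^ 2 = (a + b) ^ 2 := by rw [hab]
      nlinarith [two_mul_le_add_sq a b]
    · exact Nat.mul_le_mul (Nat.sub_le _ _) (Nat.sub_le _ _)
end

section
/- Let (P,G,B) be a transversal design TD(2,α) with α > 2. Then for every 1 ≤ i ≤ 5 and every set of i distinct blocks of B, the union of these blocks contains at least i points. -/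
/-- In a `TD(2,α)` with `α > 2`, any `i` distinct blocks, `1 ≤ i ≤ 5`,
cover at least `i` points (`S.sup id` is the union of the blocks in `S`). -/
theorem td2_hall_five {P : Type*} [Fintype P] [DecidableEq P]
    (α : ℕ) (hα : 2 < α) (Gr B : Finset (Finset P))
    (hTD : IsTransversalDesign 2 α Gr B) :
    ∀ S : Finset (Finset P), S ⊆ B → 1 ≤ S.card → S.card ≤ 5 →
      S.card ≤ (S.sup id).card := by
  intro S hSB h1 h5
  obtain ⟨g1, g2, hne, hGr⟩ := Finset.card_eq_two.mp hTD.card_groups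
  have hg1 : g1 ∈ Gr := by rw [hGr]; simp
  have hg2 : g2 ∈ Gr := by rw [hGr]; simp
  set U := S.sup id with hU
  have hbU : ∀ b ∈ S, b ⊆ U := fun b hb => Finset.le_sup (f := id) hb
  -- pick the unique point of each block in each group
  have key : ∀ b : {x // x ∈ S}, ∃ p q : P,
      (b : Finset P) ∩ g1 = {p} ∧ (b : Finset P) ∩ g2 = {q} := by
    rintro ⟨b, hb⟩
    obtain ⟨p, hp⟩ := Finset.card_eq_one.mp (hTD.block_meets_group b (hSB hb) g1 hg1)
    obtain ⟨q, hq⟩ := Finset.card_eq_one.mp (hTD.block_meets_group b (hSB hb) g2 hg2)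
    exact ⟨p, q, hp, hq⟩
  choose p q hp hq using key
  have hpmem : ∀ b : {x // x ∈ S}, p b ∈ (b : Finset P) ∩ g1 := by
    intro b; rw [hp b]; simp
  have hqmem : ∀ b : {x // x ∈ S}, q b ∈ (b : Finset P) ∩ g2 := by
    intro b; rw [hq b]; simp
  -- injection into (U ∩ g1) ×ˢ (U ∩ g2)
  have hcard : S.card ≤ ((U ∩ g1) ×ˢ (U ∩ g2)).card := by
    rw [← Finset.card_attach]
    apply Finset.card_le_card_of_injOn (fun b => (p b, q b))
    · intro b _
      have hpb := hpmem b
      have hqb := hqmem b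
      simp only [Finset.mem_inter] at hpb hqb
      simp only [Finset.mem_coe, Finset.mem_product, Finset.mem_inter]
      exact ⟨⟨hbU b b.2 hpb.1, hpb.2⟩, hbU b b.2 hqb.1, hqb.2⟩
    · intro b1 _ b2 _ heq
      simp only [Prod.mk.injEq] at heq
      have hpb1 := hpmem b1
      have hqb1 := hqmem b1
      have hpb2 := hpmem b2
      have hqb2 := hqmem b2
      simp only [Finset.mem_inter] at hpb1 hqb1 hpb2 hqb2
      obtain ⟨bb, _, huniq⟩ := hTD.pairs_covered (p b1) (q b1) g1 hg1 g2 hg2 hne hpb1.2 hqb1.2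
      have e1 : (b1 : Finset P) = bb := huniq _ ⟨hSB b1.2, hpb1.1, hqb1.1⟩
      have e2 : (b2 : Finset P) = bb := huniq _ ⟨hSB b2.2, heq.1 ▸ hpb2.1, heq.2 ▸ hqb2.1⟩
      exact Subtype.ext (e1.trans e2.symm)
  rw [Finset.card_product] at hcard
  -- the two parts of U
  have hdisj : Disjoint (U ∩ g1) (U ∩ g2) :=
    Finset.disjoint_of_subset_left Finset.inter_subset_right
      (Finset.disjoint_of_subset_right Finset.inter_subset_right
        (hTD.groups_disjoint g1 hg1 g2 hg2 hne))
  have hsum : (U ∩ g1).card + (U ∩ g2).card ≤ U.card := by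
    rw [← Finset.card_union_of_disjoint hdisj]
    apply Finset.card_le_card
    exact Finset.union_subset Finset.inter_subset_left Finset.inter_subset_left
  set a := (U ∩ g1).card
  set c := (U ∩ g2).card
  by_contra hlt
  push_neg at hlt
  have ha : a ≤ 4 := by omega
  have hc : c ≤ 4 := by omega
  interval_cases a <;> interval_cases c <;> omega
end

section
/- Let (P,G,B) be a resolvable transversal design TD(α−1,α) for a prime power α, and let k be a positive integer with k ≤ α(α−1); write k = x(α−1) + y with x, y nonnegative integers and y ≤ α − 2. Then every k-element subset S of the point set P meets at least kα − C(k,2) + (α−1)·C(x,2) + xy blocks of B, where C(a,2) = a(a−1)/2; that is, the number of blocks containing at least one point of S is at least kα − k(k−1)/2 + (α−1)·x(x−1)/2 + xy. -/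
private lemma TDaux.sum_card_inter {P : Type*} [DecidableEq P] (A : Finset (Finset P)) (S : Finset P) :
    ∑ b ∈ A, (b ∩ S).card = ∑ p ∈ S, (A.filter (fun b => p ∈ b)).card := by
  have h : ∀ b ∈ A, (b ∩ S).card = ∑ p ∈ S, if p ∈ b then 1 else 0 := by
    intro b _
    rw [Finset.inter_comm, ← Finset.filter_mem_eq_inter, Finset.card_filter]
  calc ∑ b ∈ A, (b ∩ S).card = ∑ b ∈ A, ∑ p ∈ S, (if p ∈ b then 1 else 0) :=
        Finset.sum_congr rfl h
    _ = ∑ p ∈ S, ∑ b ∈ A, (if p ∈ b then 1 else 0) := Finset.sum_comm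
    _ = _ := Finset.sum_congr rfl fun p _ => (Finset.card_filter _ _).symm

private lemma TDaux.sum_sq_inter {P : Type*} [DecidableEq P] (A : Finset (Finset P)) (S : Finset P) :
    ∑ b ∈ A, (b ∩ S).card * (b ∩ S).card
      = ∑ p ∈ S, ∑ q ∈ S, (A.filter (fun b => p ∈ b ∧ q ∈ b)).card := by
  have hc : ∀ b : Finset P, (b ∩ S).card = ∑ p ∈ S, if p ∈ b then 1 else 0 := by
    intro b
    rw [Finset.inter_comm, ← Finset.filter_mem_eq_inter, Finset.card_filter]
  have h : ∀ b ∈ A, (b ∩ S).card * (b ∩ S).card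
      = ∑ p ∈ S, ∑ q ∈ S, if p ∈ b ∧ q ∈ b then 1 else 0 := by
    intro b _
    rw [hc b, Finset.sum_mul_sum]
    refine Finset.sum_congr rfl fun p _ => Finset.sum_congr rfl fun q _ => ?_
    split_ifs with h1 h2 h3 <;> simp_all
  calc ∑ b ∈ A, (b ∩ S).card * (b ∩ S).card
      = ∑ b ∈ A, ∑ p ∈ S, ∑ q ∈ S, (if p ∈ b ∧ q ∈ b then 1 else 0) :=
        Finset.sum_congr rfl h
    _ = ∑ p ∈ S, ∑ b ∈ A, ∑ q ∈ S, (if p ∈ b ∧ q ∈ b then 1 else 0) := Finset.sum_comm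
    _ = ∑ p ∈ S, ∑ q ∈ S, ∑ b ∈ A, (if p ∈ b ∧ q ∈ b then 1 else 0) :=
        Finset.sum_congr rfl fun p _ => Finset.sum_comm
    _ = _ := Finset.sum_congr rfl fun p _ => Finset.sum_congr rfl fun q _ =>
        (Finset.card_filter _ _).symm

private lemma TDaux.filter_card_one {β : Type*} [DecidableEq β] {A : Finset β} {pred : β → Prop}
    [DecidablePred pred] (h : ∃! b, b ∈ A ∧ pred b) : (A.filter pred).card = 1 := by
  obtain ⟨b, ⟨hbA, hbp⟩, hu⟩ := h
  rw [Finset.card_eq_one]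
  refine ⟨b, ?_⟩
  ext c
  simp only [Finset.mem_filter, Finset.mem_singleton]
  exact ⟨fun hc => hu c hc, fun hc => hc ▸ ⟨hbA, hbp⟩⟩

private lemma TDaux.int_tangent (a b : ℤ) : (2 * b + 1) * a ≤ a * a + b * (b + 1) := by
  have h : 0 ≤ (a - b) * (a - b - 1) := by
    rcases le_or_gt (a - b) 0 with h | h
    · nlinarith [sq_nonneg (a - b)]
    · nlinarith
  nlinarith


/-- A transversal design `TD(ℓ, h)` is resolvable if its block set can be
partitioned into `h` parallel classes of `h` blocks each, so that every point
lies in exactly one block of each class. -/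
def IsResolvableTransversalDesign {P : Type*} [Fintype P] [DecidableEq P]
    (ℓ h : ℕ) (Gr : Finset (Finset P)) (B : Finset (Finset P)) : Prop :=
  IsTransversalDesign ℓ h Gr B ∧
  ∃ C : Finset (Finset (Finset P)), C.card = h ∧
    (∀ c ∈ C, c.card = h ∧ c ⊆ B) ∧
    (∀ c₁ ∈ C, ∀ c₂ ∈ C, c₁ ≠ c₂ → Disjoint c₁ c₂) ∧
    C.sup id = B ∧
    (∀ c ∈ C, ∀ p : P, ∃! b, b ∈ c ∧ p ∈ b)

/-- For a resolvable `TD(α-1,α)` with `α` a prime power and `k = x(α-1) + y`,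
`y ≤ α - 2`, every `k`-subset `S` of points meets at least
`kα - C(k,2) + (α-1)C(x,2) + xy` blocks. -/
theorem resolvable_td_file_size_bound {P : Type*} [Fintype P] [DecidableEq P]
    (α : ℕ) (hα : IsPrimePow α) (Gr B : Finset (Finset P))
    (hTD : IsResolvableTransversalDesign (α - 1) α Gr B)
    (k x y : ℕ) (hk : 0 < k) (hkmax : k ≤ α * (α - 1))
    (hxy : k = x * (α - 1) + y) (hy : y ≤ α - 2) :
    ∀ S : Finset P, S.card = k →
      (k : ℤ) * α - (k : ℤ) * ((k : ℤ) - 1) / 2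
          + ((α : ℤ) - 1) * ((x : ℤ) * ((x : ℤ) - 1) / 2) + (x : ℤ) * (y : ℤ)
        ≤ ((B.filter (fun b => ∃ p ∈ S, p ∈ b)).card : ℤ) := by
  obtain ⟨td, C, hCcard, hCmem, hCdisj, hCsup, hCpoint⟩ := hTD
  have hα2 : 2 ≤ α := hα.two_le
  have hα1 : 1 ≤ α := by omega
  intro S hS
  -- unique group through each point
  have hgrp : ∀ p : P, ∃! g, g ∈ Gr ∧ p ∈ g := by
    intro p
    obtain ⟨g, hg, hpg⟩ := td.groups_cover p
    refine ⟨g, ⟨hg, hpg⟩, ?_⟩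
    rintro g' ⟨hg', hpg'⟩
    by_contra hne
    exact (Finset.disjoint_left.mp (td.groups_disjoint g' hg' g hg hne)) hpg' hpg
  -- each point lies in exactly α blocks
  have hB : B = C.biUnion id := by rw [← hCsup, Finset.sup_eq_biUnion]
  have hdeg : ∀ p : P, (B.filter (fun b => p ∈ b)).card = α := by
    intro p
    have hdisj : ∀ c₁ ∈ C, ∀ c₂ ∈ C, c₁ ≠ c₂ →
        Disjoint ((id c₁).filter (fun b => p ∈ b)) ((id c₂).filter (fun b => p ∈ b)) :=
      fun c₁ h₁ c₂ h₂ hne => Finset.disjoint_filter_filter (hCdisj c₁ h₁ c₂ h₂ hne)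
    rw [hB, Finset.filter_biUnion, Finset.card_biUnion hdisj]
    calc ∑ c ∈ C, ((id c).filter (fun b => p ∈ b)).card = ∑ c ∈ C, 1 :=
          Finset.sum_congr rfl fun c hc => TDaux.filter_card_one (hCpoint c hc p)
      _ = α := by rw [Finset.sum_const, smul_eq_mul, mul_one, hCcard]
  have hM1 : ∀ p : P, (Gr.filter (fun g => p ∈ g)).card = 1 :=
    fun p => TDaux.filter_card_one (hgrp p)
  -- pointwise pair count
  have hNM : ∀ p ∈ S, ∀ q ∈ S,
      (B.filter (fun b => p ∈ b ∧ q ∈ b)).card + (Gr.filter (fun g => p ∈ g ∧ q ∈ g)).card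
        = if p = q then α + 1 else 1 := by
    intro p _ q _
    by_cases hpq : p = q
    · subst hpq
      rw [if_pos rfl]
      simp only [and_self]
      rw [hdeg p, hM1 p]
    · rw [if_neg hpq]
      obtain ⟨g₁, ⟨hg₁, hpg₁⟩, hu₁⟩ := hgrp p
      by_cases hq : q ∈ g₁
      · have hN0 : (B.filter (fun b => p ∈ b ∧ q ∈ b)) = ∅ := by
          rw [Finset.filter_eq_empty_iff]
          rintro b hb ⟨hpb, hqb⟩
          have h1 := td.block_meets_group b hb g₁ hg₁
          have h2 : ({p, q} : Finset P) ⊆ b ∩ g₁ := by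
            intro r hr
            rcases Finset.mem_insert.mp hr with rfl | hr
            · exact Finset.mem_inter.mpr ⟨hpb, hpg₁⟩
            · rw [Finset.mem_singleton] at hr
              subst hr
              exact Finset.mem_inter.mpr ⟨hqb, hq⟩
          have h3 := Finset.card_le_card h2
          rw [Finset.card_pair hpq] at h3
          omega
        have hM' : (Gr.filter (fun g => p ∈ g ∧ q ∈ g)).card = 1 := by
          apply TDaux.filter_card_one
          exact ⟨g₁, ⟨hg₁, hpg₁, hq⟩, fun g' h' => hu₁ g' ⟨h'.1, h'.2.1⟩⟩
        rw [hN0, hM']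
        simp
      · obtain ⟨g₂, ⟨hg₂, hqg₂⟩, hu₂⟩ := hgrp q
        have hne : g₁ ≠ g₂ := fun h => hq (h ▸ hqg₂)
        have hN1 : (B.filter (fun b => p ∈ b ∧ q ∈ b)).card = 1 :=
          TDaux.filter_card_one (td.pairs_covered p q g₁ hg₁ g₂ hg₂ hne hpg₁ hqg₂)
        have hM0 : (Gr.filter (fun g => p ∈ g ∧ q ∈ g)) = ∅ := by
          rw [Finset.filter_eq_empty_iff]
          rintro g hg ⟨hpg, hqg⟩
          have e1 : g = g₁ := hu₁ g ⟨hg, hpg⟩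
          have e2 : g = g₂ := hu₂ g ⟨hg, hqg⟩
          exact hne (e1 ▸ e2)
        rw [hN1, hM0]
        simp
  -- F1
  have F1 : ∑ b ∈ B, (b ∩ S).card = k * α := by
    rw [TDaux.sum_card_inter]
    calc ∑ p ∈ S, (B.filter (fun b => p ∈ b)).card = ∑ p ∈ S, α :=
          Finset.sum_congr rfl fun p _ => hdeg p
      _ = k * α := by rw [Finset.sum_const, smul_eq_mul, hS]
  -- F4
  have F4 : ∑ g ∈ Gr, (g ∩ S).card = k := by
    rw [TDaux.sum_card_inter]
    calc ∑ p ∈ S, (Gr.filter (fun g => p ∈ g)).card = ∑ p ∈ S, 1 :=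
          Finset.sum_congr rfl fun p _ => hM1 p
      _ = k := by rw [Finset.sum_const, smul_eq_mul, mul_one, hS]
  -- F2
  have F2 : (∑ b ∈ B, (b ∩ S).card * (b ∩ S).card)
      + (∑ g ∈ Gr, (g ∩ S).card * (g ∩ S).card) = k * α + k * k := by
    rw [TDaux.sum_sq_inter, TDaux.sum_sq_inter]
    calc (∑ p ∈ S, ∑ q ∈ S, (B.filter (fun b => p ∈ b ∧ q ∈ b)).card)
          + (∑ p ∈ S, ∑ q ∈ S, (Gr.filter (fun g => p ∈ g ∧ q ∈ g)).card)
        = ∑ p ∈ S, ∑ q ∈ S, ((B.filter (fun b => p ∈ b ∧ q ∈ b)).card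
            + (Gr.filter (fun g => p ∈ g ∧ q ∈ g)).card) := by
          rw [← Finset.sum_add_distrib]
          exact Finset.sum_congr rfl fun p _ => Finset.sum_add_distrib.symm
      _ = ∑ p ∈ S, ∑ q ∈ S, (if p = q then α + 1 else 1) :=
          Finset.sum_congr rfl fun p hp => Finset.sum_congr rfl fun q hq => hNM p hp q hq
      _ = ∑ p ∈ S, (α + k) := by
          refine Finset.sum_congr rfl fun p hp => ?_
          have h : ∀ q ∈ S, (if p = q then α + 1 else (1 : ℕ)) = (if p = q then α else 0) + 1 := by
            intro q _
            split_ifs <;> omega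
          rw [Finset.sum_congr rfl h, Finset.sum_add_distrib, Finset.sum_ite_eq, if_pos hp,
            Finset.sum_const, smul_eq_mul, mul_one, hS]
      _ = k * (α + k) := by rw [Finset.sum_const, smul_eq_mul, hS]
      _ = k * α + k * k := by ring
  -- F3
  have F3 : 3 * (k * α) ≤ (∑ b ∈ B, (b ∩ S).card * (b ∩ S).card)
      + 2 * (B.filter (fun b => ∃ p ∈ S, p ∈ b)).card := by
    have h33 : ∀ t : ℕ, 3 * t ≤ t * t + 2 := by
      intro t
      rcases t with _ | _ | t <;> nlinarith
    have hpt : ∀ b ∈ B, 3 * (b ∩ S).card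
        ≤ (b ∩ S).card * (b ∩ S).card + 2 * (if ∃ p ∈ S, p ∈ b then 1 else 0) := by
      intro b _
      by_cases hne : ∃ p ∈ S, p ∈ b
      · rw [if_pos hne, mul_one]
        exact h33 _
      · rw [if_neg hne]
        have he : (b ∩ S) = ∅ := by
          rw [Finset.eq_empty_iff_forall_notMem]
          intro r hr
          rw [Finset.mem_inter] at hr
          exact hne ⟨r, hr.2, hr.1⟩
        rw [he]
        simp
    calc 3 * (k * α) = ∑ b ∈ B, 3 * (b ∩ S).card := by rw [← Finset.mul_sum, F1]
      _ ≤ ∑ b ∈ B, ((b ∩ S).card * (b ∩ S).card + 2 * (if ∃ p ∈ S, p ∈ b then 1 else 0)) :=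
          Finset.sum_le_sum hpt
      _ = (∑ b ∈ B, (b ∩ S).card * (b ∩ S).card)
          + 2 * (B.filter (fun b => ∃ p ∈ S, p ∈ b)).card := by
          rw [Finset.sum_add_distrib, ← Finset.mul_sum, Finset.card_filter]
  -- F5 (in ℤ)
  have hGrz : (Gr.card : ℤ) = (α : ℤ) - 1 := by
    rw [td.card_groups, Nat.cast_sub hα1, Nat.cast_one]
  have F5 : (2 * (x : ℤ) + 1) * (k : ℤ)
      ≤ ((∑ g ∈ Gr, (g ∩ S).card * (g ∩ S).card : ℕ) : ℤ)
        + ((α : ℤ) - 1) * ((x : ℤ) * ((x : ℤ) + 1)) := by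
    have hpt := Finset.sum_le_sum
      (fun g (_ : g ∈ Gr) => TDaux.int_tangent ((g ∩ S).card : ℤ) (x : ℤ))
    rw [← Finset.mul_sum, Finset.sum_add_distrib, Finset.sum_const, nsmul_eq_mul, hGrz] at hpt
    have h1 : (∑ g ∈ Gr, ((g ∩ S).card : ℤ)) = (k : ℤ) := by
      rw [← Nat.cast_sum, F4]
    rw [h1] at hpt
    have h2 : ((∑ g ∈ Gr, (g ∩ S).card * (g ∩ S).card : ℕ) : ℤ)
        = ∑ g ∈ Gr, ((g ∩ S).card : ℤ) * ((g ∩ S).card : ℤ) := by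
      push_cast
      rfl
    rw [h2]
    exact hpt
  -- assemble in ℤ
  have F2z : ((∑ b ∈ B, (b ∩ S).card * (b ∩ S).card : ℕ) : ℤ)
      + ((∑ g ∈ Gr, (g ∩ S).card * (g ∩ S).card : ℕ) : ℤ) = (k : ℤ) * α + (k : ℤ) * k := by
    exact_mod_cast F2
  have F3z : 3 * ((k : ℤ) * α) ≤ ((∑ b ∈ B, (b ∩ S).card * (b ∩ S).card : ℕ) : ℤ)
      + 2 * ((B.filter (fun b => ∃ p ∈ S, p ∈ b)).card : ℤ) := by
    exact_mod_cast F3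
  have hkz : (k : ℤ) = (x : ℤ) * ((α : ℤ) - 1) + (y : ℤ) := by
    have h := congrArg (Nat.cast : ℕ → ℤ) hxy
    push_cast [Nat.cast_sub hα1] at h
    exact h
  have hxk : (x : ℤ) * (k : ℤ) = (x : ℤ) * (x : ℤ) * ((α : ℤ) - 1) + (x : ℤ) * (y : ℤ) := by
    rw [hkz]; ring
  have hDk : 2 * ((k : ℤ) * ((k : ℤ) - 1) / 2) = (k : ℤ) * ((k : ℤ) - 1) :=
    Int.two_mul_ediv_two_of_even (Int.even_mul_pred_self _)
  have hDx : 2 * ((x : ℤ) * ((x : ℤ) - 1) / 2) = (x : ℤ) * ((x : ℤ) - 1) :=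
    Int.two_mul_ediv_two_of_even (Int.even_mul_pred_self _)
  have hDxα : ((α : ℤ) - 1) * (2 * ((x : ℤ) * ((x : ℤ) - 1) / 2))
      = ((α : ℤ) - 1) * ((x : ℤ) * ((x : ℤ) - 1)) := by rw [hDx]
  linarith [F2z, F3z, F5, hxk, hDk, hDxα]
end

section
/- Let (P,G,B) be a resolvable transversal design TD(α−1,α) for a prime power α. Then for every 1 ≤ i ≤ α² − α − 1 and every set of i distinct blocks of B, the union of these blocks contains at least i points. -/
/-- In a resolvable `TD(α-1,α)` with `α` a prime power, any `i` distinct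
blocks, `1 ≤ i ≤ α² - α - 1`, cover at least `i` points. -/
theorem resolvable_td_hall {P : Type*} [Fintype P] [DecidableEq P]
    (α : ℕ) (hα : IsPrimePow α) (Gr B : Finset (Finset P))
    (hTD : IsResolvableTransversalDesign (α - 1) α Gr B) :
    ∀ S : Finset (Finset P), S ⊆ B → 1 ≤ S.card → S.card ≤ α ^ 2 - α - 1 →
      S.card ≤ (S.sup id).card := by
  obtain ⟨td, C, hCcard, hCmem, hCdisj, hCsup, hCres⟩ := hTD
  have hα2 : 2 ≤ α := hα.two_le
  obtain ⟨β, rfl⟩ : ∃ β, α = β + 2 := ⟨α - 2, by omega⟩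
  intro S hS hS1 hS2
  by_contra hcon
  push_neg at hcon
  have hβ1 : β + 2 - 1 = β + 1 := by omega
  set i := S.card with hi
  set U := S.sup id with hU
  set u := U.card with hu
  have hcon' : u + 1 ≤ i := hcon
  -- i ≤ β² + 3β + 1
  have hi2 : i ≤ β * β + 3 * β + 1 := by
    have h := hS2
    rw [show (β+2)^2 = β*β + 4*β + 4 by ring] at h
    omega
  have hcardP : Fintype.card P = (β + 1) * (β + 2) := by
    rw [td.card_points, hβ1]
  -- multiplicity of a point in S
  set mult : P → ℕ := fun p => (S.filter (fun b => p ∈ b)).card with hmult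
  have hmultB : ∀ p : P, (B.filter (fun b => p ∈ b)).card = β + 2 := by
    intro p
    rw [← hCsup, Finset.sup_eq_biUnion, Finset.filter_biUnion]
    simp only [id_eq]
    rw [Finset.card_biUnion (fun c₁ h₁ c₂ h₂ hne =>
        ((hCdisj c₁ h₁ c₂ h₂ hne).mono (Finset.filter_subset _ _)
          (Finset.filter_subset _ _)))]
    rw [Finset.sum_congr rfl (fun c hc => ?_), Finset.sum_const, smul_eq_mul,
      mul_one, hCcard]
    obtain ⟨b, ⟨hb1, hb2⟩, hbu⟩ := hCres c hc p
    rw [Finset.card_eq_one]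
    refine ⟨b, ?_⟩
    ext x
    simp only [id, Finset.mem_filter, Finset.mem_singleton]
    exact ⟨fun h => hbu x ⟨h.1, h.2⟩, fun h => h ▸ ⟨hb1, hb2⟩⟩
  have hmult_le : ∀ p, mult p ≤ β + 2 := fun p => by
    rw [← hmultB p]
    exact Finset.card_le_card (Finset.filter_subset_filter _ hS)
  have hmemU : ∀ p : P, p ∈ U ↔ ∃ b ∈ S, p ∈ b := fun p => by
    simp [hU, Finset.mem_sup, id]
  -- double counting
  have hsum : ∑ p : P, mult p = i * (β + 1) := by
    have h1 : ∑ p : P, mult p = ∑ b ∈ S, b.card := by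
      simp only [hmult, Finset.card_filter]
      rw [Finset.sum_comm]
      refine Finset.sum_congr rfl fun b hb => ?_
      rw [← Finset.card_filter]
      congr 1
      ext x; simp
    rw [h1, Finset.sum_congr rfl fun b hb => td.block_card b (hS hb),
      Finset.sum_const, smul_eq_mul, hβ1]
  -- full points
  set F := Finset.univ.filter (fun p => β + 2 ≤ mult p) with hF
  set f := F.card with hf
  have hFU : F ⊆ U := by
    intro p hp
    rw [hmemU]
    have hpos : 0 < mult p :=
      lt_of_lt_of_le (by omega) (Finset.mem_filter.mp hp).2
    obtain ⟨b, hb⟩ := Finset.card_pos.mp hpos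
    exact ⟨b, (Finset.mem_filter.mp hb).1, (Finset.mem_filter.mp hb).2⟩
  set d := (U \ F).card with hd
  have hfd : d + f = u := Finset.card_sdiff_add_card_eq_card hFU
  have h1 : i * (β + 1) ≤ f * (β + 2) + d * (β + 1) := by
    rw [← hsum]
    have h0 : ∑ p : P, mult p = ∑ p ∈ U, mult p := by
      refine (Finset.sum_subset (Finset.subset_univ U) ?_).symm
      intro p _ hp
      rw [hmult]
      simp only []
      rw [Finset.card_eq_zero, Finset.filter_eq_empty_iff]
      intro b hb hpb
      exact hp ((hmemU p).mpr ⟨b, hb, hpb⟩)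
    rw [h0, ← Finset.sum_sdiff hFU]
    have hA : ∑ p ∈ U \ F, mult p ≤ d * (β + 1) := by
      rw [hd]
      refine Finset.sum_le_card_nsmul _ _ _ fun p hp => ?_
      have := (Finset.mem_sdiff.mp hp).2
      rw [hF] at this
      simp only [Finset.mem_filter, Finset.mem_univ, true_and, not_le] at this
      omega
    have hB : ∑ p ∈ F, mult p ≤ f * (β + 2) := by
      rw [hf]
      exact Finset.sum_le_card_nsmul _ _ _ fun p _ => hmult_le p
    omega
  -- f > 0
  have hfpos : 0 < f := by
    rcases Nat.eq_zero_or_pos f with h | h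
    · exfalso
      have hdu : d = u := by omega
      have h1' : i * (β + 1) ≤ u * (β + 1) := by
        rw [← hdu]; simpa [h] using h1
      have := Nat.le_of_mul_le_mul_right h1' (show 0 < β + 1 by omega)
      omega
    · exact h
  obtain ⟨p, hpF⟩ := Finset.card_pos.mp hfpos
  -- full points contain all blocks through them
  have hfull : ∀ q ∈ F, ∀ b ∈ B, q ∈ b → b ∈ S := by
    intro q hq b hb hqb
    have hsub : B.filter (fun b => q ∈ b) ⊆ S.filter (fun b => q ∈ b) := by
      refine Finset.subset_of_eq (Finset.eq_of_subset_of_card_le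
        (Finset.filter_subset_filter _ hS) ?_).symm
      rw [hmultB q]
      exact (Finset.mem_filter.mp hq).2
    exact (Finset.mem_filter.mp (hsub (Finset.mem_filter.mpr ⟨hb, hqb⟩))).1
  -- coverage: uncovered points lie in the group of any full point
  have hcover : ∀ q ∈ F, ∀ g ∈ Gr, q ∈ g → ∀ r : P, r ∉ U → r ∈ g := by
    intro q hq g hg hqg r hr
    obtain ⟨g₂, hg₂, hrg₂⟩ := td.groups_cover r
    by_cases hne : g = g₂
    · exact hne ▸ hrg₂
    · exfalso
      obtain ⟨b, ⟨hbB, hqb, hrb⟩, -⟩ :=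
        td.pairs_covered q r g hg g₂ hg₂ hne hqg hrg₂
      exact hr ((hmemU r).mpr ⟨b, hfull q hq b hbB hqb, hrb⟩)
  obtain ⟨g₁, hg₁, hpg₁⟩ := td.groups_cover p
  -- all full points are in g₁
  have hFg : ∀ q ∈ F, q ∈ g₁ := by
    intro q hq
    obtain ⟨g₂, hg₂, hqg₂⟩ := td.groups_cover q
    by_cases hne : g₁ = g₂
    · exact hne ▸ hqg₂
    · exfalso
      have hUuniv : ∀ r : P, r ∈ U := by
        intro r
        by_contra hr
        have ha := hcover p hpF g₁ hg₁ hpg₁ r hr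
        have hb := hcover q hq g₂ hg₂ hqg₂ r hr
        exact (Finset.disjoint_left.mp (td.groups_disjoint g₁ hg₁ g₂ hg₂ hne)) ha hb
      have hcP : Fintype.card P ≤ u := by
        rw [← Finset.card_univ]
        exact Finset.card_le_card fun x _ => hUuniv x
      rw [hcardP] at hcP
      nlinarith [hcon', hi2, hcP]
  -- F and univ \ U are disjoint subsets of g₁
  have hdisj : Disjoint F (Finset.univ \ U) :=
    Finset.disjoint_left.mpr fun x hx hx' => (Finset.mem_sdiff.mp hx').2 (hFU hx)
  have hsubg : F ∪ (Finset.univ \ U) ⊆ g₁ :=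
    Finset.union_subset (fun x hx => hFg x hx)
      (fun x hx => hcover p hpF g₁ hg₁ hpg₁ x (Finset.mem_sdiff.mp hx).2)
  have h2 : f + (Fintype.card P - u) ≤ β + 2 := by
    have hle := Finset.card_le_card hsubg
    rw [Finset.card_union_of_disjoint hdisj,
      Finset.card_sdiff_of_subset (Finset.subset_univ U), Finset.card_univ,
      td.group_card g₁ hg₁] at hle
    exact hle
  have huP : u ≤ Fintype.card P := Finset.card_le_univ U
  have h2' : f + Fintype.card P ≤ (β + 2) + u := by omega
  rw [hcardP] at h2'
  -- final contradiction
  have H : (u + 1) * (β + 1) ≤ i * (β + 1) := mul_le_mul_left hcon' _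
  have hfdβ : d * (β + 1) + f * (β + 1) = u * (β + 1) := by
    rw [← add_mul, hfd]
  nlinarith [H, h1, hfdβ, h2', hcon', hi2]
end

section
/- Let (P,G,B) be a transversal design TD(3,α) with α ≥ 7. Then for every 1 ≤ i ≤ 6 and every set of i distinct blocks of B, the union of these blocks contains at least i points. -/
/-- Two distinct blocks of a transversal design meet in at most one point. -/
lemma td_inter_le_one {P : Type*} [Fintype P] [DecidableEq P]
    {ℓ h : ℕ} {Gr B : Finset (Finset P)}
    (hTD : IsTransversalDesign ℓ h Gr B)
    {b₁ b₂ : Finset P} (hb₁ : b₁ ∈ B) (hb₂ : b₂ ∈ B) (hne : b₁ ≠ b₂) :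
    (b₁ ∩ b₂).card ≤ 1 := by
  by_contra hc
  push_neg at hc
  obtain ⟨p, hp, q, hq, hpq⟩ := Finset.one_lt_card.mp hc
  simp only [Finset.mem_inter] at hp hq
  obtain ⟨g₁, hg₁, hpg₁⟩ := hTD.groups_cover p
  obtain ⟨g₂, hg₂, hqg₂⟩ := hTD.groups_cover q
  by_cases hg : g₁ = g₂
  · subst hg
    have h1 := hTD.block_meets_group b₁ hb₁ g₁ hg₁
    have : 1 < (b₁ ∩ g₁).card :=
      Finset.one_lt_card.mpr ⟨p, Finset.mem_inter.mpr ⟨hp.1, hpg₁⟩,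
        q, Finset.mem_inter.mpr ⟨hq.1, hqg₂⟩, hpq⟩
    omega
  · obtain ⟨b, _, hu⟩ := hTD.pairs_covered p q g₁ hg₁ g₂ hg₂ hg hpg₁ hqg₂
    exact hne ((hu b₁ ⟨hb₁, hp.1, hq.1⟩).trans (hu b₂ ⟨hb₂, hp.2, hq.2⟩).symm)

/-- In a `TD(3,α)` with `α ≥ 7`, any `i` distinct blocks, `1 ≤ i ≤ 6`,
cover at least `i` points. -/
theorem td3_hall_six {P : Type*} [Fintype P] [DecidableEq P]
    (α : ℕ) (hα : 7 ≤ α) (Gr B : Finset (Finset P))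
    (hTD : IsTransversalDesign 3 α Gr B) :
    ∀ S : Finset (Finset P), S ⊆ B → 1 ≤ S.card → S.card ≤ 6 →
      S.card ≤ (S.sup id).card := by
  intro S hSB h1 h6
  by_cases h3 : S.card ≤ 3
  · obtain ⟨b, hb⟩ := Finset.card_pos.mp h1
    have hsub : b ⊆ S.sup id := Finset.le_sup (f := id) hb
    have := hTD.block_card b (hSB hb)
    have := Finset.card_le_card hsub
    omega
  · push_neg at h3
    have h2 : 2 < S.card := by omega
    obtain ⟨a, b, c, ha, hb, hc, hab, hac, hbc⟩ := Finset.two_lt_card_iff.mp h2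
    have hca := hTD.block_card a (hSB ha)
    have hcb := hTD.block_card b (hSB hb)
    have hcc := hTD.block_card c (hSB hc)
    have hiab := td_inter_le_one hTD (hSB ha) (hSB hb) hab
    have hiac := td_inter_le_one hTD (hSB ha) (hSB hc) hac
    have hibc := td_inter_le_one hTD (hSB hb) (hSB hc) hbc
    have e1 : (a ∪ b).card + (a ∩ b).card = a.card + b.card :=
      Finset.card_union_add_card_inter a b
    have e2 : ((a ∪ b) ∪ c).card + ((a ∪ b) ∩ c).card = (a ∪ b).card + c.card :=
      Finset.card_union_add_card_inter (a ∪ b) c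
    have e3 : ((a ∪ b) ∩ c).card ≤ (a ∩ c).card + (b ∩ c).card := by
      rw [Finset.union_inter_distrib_right]
      exact Finset.card_union_le _ _
    have hsub : (a ∪ b) ∪ c ⊆ S.sup id :=
      Finset.union_subset (Finset.union_subset (Finset.le_sup (f := id) ha)
        (Finset.le_sup (f := id) hb)) (Finset.le_sup (f := id) hc)
    have := Finset.card_le_card hsub
    omega
end

section
/- Let (P,G,B) be a transversal design TD(3,α) with α ≥ 7. Then there exists a set of 2α + 2 distinct blocks of B whose union contains at most 2α + 1 points. -/
/-- Counting lemma: blocks through a fixed point `x ∈ g1`, one for each point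
of a set `D ⊆ g2`, all satisfying an extra predicate `Pr`. -/
lemma count_ge {P : Type*} [Fintype P] [DecidableEq P]
    {α : ℕ} {Gr B : Finset (Finset P)}
    (hTD : IsTransversalDesign 3 α Gr B)
    {g1 g2 : Finset P} (hg1 : g1 ∈ Gr) (hg2 : g2 ∈ Gr) (h12 : g1 ≠ g2)
    {x : P} (hx : x ∈ g1) (D : Finset P) (hD : D ⊆ g2)
    (Pr : Finset P → Prop) [DecidablePred Pr]
    (hPr : ∀ q' ∈ D, ∀ b ∈ B, x ∈ b → q' ∈ b → Pr b) :
    D.card ≤ (B.filter (fun b => x ∈ b ∧ Pr b)).card := by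
  classical
  have hex : ∀ q' ∈ D, ∃! b, b ∈ B ∧ x ∈ b ∧ q' ∈ b :=
    fun q' hq' => hTD.pairs_covered x q' g1 hg1 g2 hg2 h12 hx (hD hq')
  have hspec : ∀ q' (h : q' ∈ D),
      (hex q' h).choose ∈ B ∧ x ∈ (hex q' h).choose ∧ q' ∈ (hex q' h).choose :=
    fun q' h => (hex q' h).choose_spec.1
  set f : P → Finset P := fun q' => if h : q' ∈ D then (hex q' h).choose else ∅ with hf
  apply Finset.card_le_card_of_injOn f
  · intro q' hq'
    rw [Finset.mem_coe] at hq'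
    rw [Finset.mem_coe]
    obtain ⟨hb, hx', hq''⟩ := hspec q' hq'
    simp only [hf, dif_pos hq', Finset.mem_filter]
    exact ⟨hb, hx', hPr q' hq' _ hb hx' hq''⟩
  · intro q1 h1 q2 h2 heq
    rw [Finset.mem_coe] at h1 h2
    simp only [hf, dif_pos h1, dif_pos h2] at heq
    obtain ⟨hb1, hx1, hm1⟩ := hspec q1 h1
    obtain ⟨hb2, hx2, hm2⟩ := hspec q2 h2
    have hcard := hTD.block_meets_group _ hb1 g2 hg2
    refine Finset.card_le_one.mp (le_of_eq hcard) q1 ?_ q2 ?_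
    · exact Finset.mem_inter.mpr ⟨hm1, hD h1⟩
    · exact Finset.mem_inter.mpr ⟨heq ▸ hm2, hD h2⟩

/-- In a `TD(3,α)` with `α ≥ 7`, there exist `2α + 2` distinct blocks whose
union contains at most `2α + 1` points. -/
theorem td3_hall_violation {P : Type*} [Fintype P] [DecidableEq P]
    (α : ℕ) (hα : 7 ≤ α) (Gr B : Finset (Finset P))
    (hTD : IsTransversalDesign 3 α Gr B) :
    ∃ S : Finset (Finset P), S ⊆ B ∧ S.card = 2 * α + 2 ∧
      (S.sup id).card ≤ 2 * α + 1 := by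
  classical
  obtain ⟨g1, g2, g3, h12, h13, h23, hGr⟩ := Finset.card_eq_three.mp hTD.card_groups
  have hg1 : g1 ∈ Gr := by rw [hGr]; simp
  have hg2 : g2 ∈ Gr := by rw [hGr]; simp
  have hg3 : g3 ∈ Gr := by rw [hGr]; simp
  have hg1card : g1.card = α := hTD.group_card g1 hg1
  have hg2card : g2.card = α := hTD.group_card g2 hg2
  have hg3card : g3.card = α := hTD.group_card g3 hg3
  -- the "one point per group" principle
  have hpt : ∀ g ∈ Gr, ∀ b ∈ B, ∀ p1, p1 ∈ b → p1 ∈ g → ∀ p2, p2 ∈ b → p2 ∈ g → p1 = p2 := by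
    intro g hg b hb p1 hp1 hp1g p2 hp2 hp2g
    exact Finset.card_le_one.mp (le_of_eq (hTD.block_meets_group b hb g hg))
      p1 (Finset.mem_inter.mpr ⟨hp1, hp1g⟩) p2 (Finset.mem_inter.mpr ⟨hp2, hp2g⟩)
  -- pick q ∈ g2, r ∈ g3
  obtain ⟨q, hq⟩ : g2.Nonempty := Finset.card_pos.mp (by omega)
  obtain ⟨r, hr⟩ : g3.Nonempty := Finset.card_pos.mp (by omega)
  -- the unique block through q, r and its g1-point w
  obtain ⟨b0, ⟨hb0B, hqb0, hrb0⟩, hb0uniq⟩ := hTD.pairs_covered q r g2 hg2 g3 hg3 h23 hq hr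
  obtain ⟨w, hw⟩ := Finset.card_eq_one.mp (hTD.block_meets_group b0 hb0B g1 hg1)
  have hwmem : w ∈ b0 ∩ g1 := hw ▸ Finset.mem_singleton_self w
  have hwb0 : w ∈ b0 := (Finset.mem_inter.mp hwmem).1
  have hwg1 : w ∈ g1 := (Finset.mem_inter.mp hwmem).2
  -- pick y ≠ z in g1 \ {w}
  have herase : 1 < (g1.erase w).card := by
    have := Finset.card_erase_of_mem hwg1
    omega
  obtain ⟨y, hy, z, hz, hyz⟩ := Finset.one_lt_card.mp herase
  have hyg1 : y ∈ g1 := Finset.mem_of_mem_erase hy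
  have hzg1 : z ∈ g1 := Finset.mem_of_mem_erase hz
  have hyw : y ≠ w := Finset.ne_of_mem_erase hy
  have hzw : z ≠ w := Finset.ne_of_mem_erase hz
  -- blocks through x avoiding q and r
  set Pr : Finset P → Prop := fun b => q ∉ b ∧ r ∉ b with hPrdef
  set Bw := B.filter (fun b => w ∈ b ∧ Pr b) with hBw
  set By := B.filter (fun b => y ∈ b ∧ Pr b) with hBy
  set Bz := B.filter (fun b => z ∈ b ∧ Pr b) with hBz
  -- generic fact: for x ∈ g1, a block through x and q' ∈ g2 \ {q} avoids q
  have havoidq : ∀ q', q' ∈ g2 → q' ≠ q → ∀ b ∈ B, q' ∈ b → q ∉ b := by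
    intro q' hq'g2 hq'q b hb hq'b hqb
    exact hq'q (hpt g2 hg2 b hb q' hq'b hq'g2 q hqb hq)
  -- count for w: domain g2.erase q, since the only block through w and r is b0, which contains q
  have hcw : α - 1 ≤ Bw.card := by
    have := count_ge hTD hg1 hg2 h12 hwg1 (g2.erase q) (Finset.erase_subset _ _) Pr ?_
    · calc α - 1 = (g2.erase q).card := by rw [Finset.card_erase_of_mem hq, hg2card]
        _ ≤ Bw.card := this
    · intro q' hq' b hb hwb hq'b
      constructor
      · exact havoidq q' (Finset.mem_of_mem_erase hq') (Finset.ne_of_mem_erase hq') b hb hq'b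
      · intro hrb
        -- b contains w and r, so b = b0 by uniqueness; but then q ∈ b, contradiction
        obtain ⟨c, ⟨hcB, hwc, hrc⟩, hcuniq⟩ :=
          hTD.pairs_covered w r g1 hg1 g3 hg3 (by exact h13) hwg1 hr
        have hb_eq : b = c := hcuniq b ⟨hb, hwb, hrb⟩
        have hb0_eq : b0 = c := hcuniq b0 ⟨hb0B, hwb0, hrb0⟩
        have : q ∈ b := by rw [hb_eq, ← hb0_eq]; exact hqb0
        exact havoidq q' (Finset.mem_of_mem_erase hq') (Finset.ne_of_mem_erase hq') b hb hq'b this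
  -- count for x ∈ {y, z}: domain g2 minus q and minus the g2-point of the block through x, r
  have hcyz : ∀ x, x ∈ g1 → ∀ Bx, Bx = B.filter (fun b => x ∈ b ∧ Pr b) → α - 2 ≤ Bx.card := by
    intro x hxg1 Bx hBx
    obtain ⟨c, ⟨hcB, hxc, hrc⟩, hcuniq⟩ :=
      hTD.pairs_covered x r g1 hg1 g3 hg3 h13 hxg1 hr
    obtain ⟨s, hs⟩ := Finset.card_eq_one.mp (hTD.block_meets_group c hcB g2 hg2)
    have hsmem : s ∈ c ∩ g2 := hs ▸ Finset.mem_singleton_self s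
    have hsc : s ∈ c := (Finset.mem_inter.mp hsmem).1
    subst hBx
    have := count_ge hTD hg1 hg2 h12 hxg1 ((g2.erase q).erase s)
      ((Finset.erase_subset _ _).trans (Finset.erase_subset _ _)) Pr ?_
    · have h1 : g2.card - 1 ≤ (g2.erase q).card := Finset.pred_card_le_card_erase
      have h2 : (g2.erase q).card - 1 ≤ ((g2.erase q).erase s).card :=
        Finset.pred_card_le_card_erase
      omega
    · intro q' hq' b hb hxb hq'b
      have hq'g2 : q' ∈ g2 := Finset.mem_of_mem_erase (Finset.mem_of_mem_erase hq')
      have hq'q : q' ≠ q := Finset.ne_of_mem_erase (Finset.mem_of_mem_erase hq')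
      have hq's : q' ≠ s := Finset.ne_of_mem_erase hq'
      constructor
      · exact havoidq q' hq'g2 hq'q b hb hq'b
      · intro hrb
        have hb_eq : b = c := hcuniq b ⟨hb, hxb, hrb⟩
        exact hq's (hpt g2 hg2 b hb q' hq'b hq'g2 s (hb_eq ▸ hsc) (Finset.mem_inter.mp hsmem).2)
  have hcy : α - 2 ≤ By.card := hcyz y hyg1 By hBy
  have hcz : α - 2 ≤ Bz.card := hcyz z hzg1 Bz hBz
  -- the three families are pairwise disjoint
  have hdisj : ∀ x1 x2 : P, x1 ∈ g1 → x2 ∈ g1 → x1 ≠ x2 →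
      Disjoint (B.filter (fun b => x1 ∈ b ∧ Pr b)) (B.filter (fun b => x2 ∈ b ∧ Pr b)) := by
    intro x1 x2 hx1 hx2 hne
    rw [Finset.disjoint_left]
    intro b hb1 hb2
    rw [Finset.mem_filter] at hb1 hb2
    exact hne (hpt g1 hg1 b hb1.1 x1 hb1.2.1 hx1 x2 hb2.2.1 hx2)
  set S₀ := Bw ∪ By ∪ Bz with hS₀
  have hS₀card : 2 * α + 2 ≤ S₀.card := by
    have hd1 : Disjoint Bw By := hdisj w y hwg1 hyg1 (fun h => hyw h.symm)
    have hd2 : Disjoint (Bw ∪ By) Bz := by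
      rw [Finset.disjoint_union_left]
      exact ⟨hdisj w z hwg1 hzg1 (fun h => hzw h.symm), hdisj y z hyg1 hzg1 hyz⟩
    rw [hS₀, Finset.card_union_of_disjoint hd2, Finset.card_union_of_disjoint hd1]
    omega
  obtain ⟨S, hSS₀, hScard⟩ := Finset.exists_subset_card_eq hS₀card
  have hS₀B : S₀ ⊆ B := by
    rw [hS₀]
    refine Finset.union_subset (Finset.union_subset ?_ ?_) ?_ <;> exact Finset.filter_subset _ _
  refine ⟨S, hSS₀.trans hS₀B, hScard, ?_⟩
  -- the union of blocks in S misses g1 \ {w,y,z}, q and r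
  have hsub : S.sup id ⊆ ({w, y, z} : Finset P) ∪ (g2.erase q) ∪ (g3.erase r) := by
    intro p hp
    rw [Finset.mem_sup] at hp
    obtain ⟨b, hbS, hpb⟩ := hp
    have hbS₀ := hSS₀ hbS
    rw [hS₀, Finset.mem_union, Finset.mem_union, hBw, hBy, hBz] at hbS₀
    simp only [Finset.mem_filter] at hbS₀
    have hbB : b ∈ B := by rcases hbS₀ with (h | h) | h <;> exact h.1
    have hbx : ∃ x ∈ ({w, y, z} : Finset P), x ∈ b := by
      rcases hbS₀ with (h | h) | h
      · exact ⟨w, by simp, h.2.1⟩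
      · exact ⟨y, by simp, h.2.1⟩
      · exact ⟨z, by simp, h.2.1⟩
    have hbPr : Pr b := by rcases hbS₀ with (h | h) | h <;> exact h.2.2
    have hpb' : p ∈ (b : Finset P) := hpb
    obtain ⟨g, hg, hpg⟩ := hTD.groups_cover p
    rw [hGr] at hg
    simp only [Finset.mem_insert, Finset.mem_singleton] at hg
    rw [Finset.mem_union, Finset.mem_union]
    rcases hg with hg | hg | hg
    · rw [hg] at hpg
      obtain ⟨x, hxmem, hxb⟩ := hbx
      have hxg1 : x ∈ g1 := by
        simp only [Finset.mem_insert, Finset.mem_singleton] at hxmem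
        rcases hxmem with h | h | h <;> subst h <;> assumption
      left; left
      have : p = x := hpt g1 hg1 b hbB p hpb' hpg x hxb hxg1
      rwa [this]
    · rw [hg] at hpg
      left; right
      exact Finset.mem_erase.mpr ⟨fun h => hbPr.1 (h ▸ hpb'), hpg⟩
    · rw [hg] at hpg
      right
      exact Finset.mem_erase.mpr ⟨fun h => hbPr.2 (h ▸ hpb'), hpg⟩
  calc (S.sup id).card ≤ (({w, y, z} : Finset P) ∪ (g2.erase q) ∪ (g3.erase r)).card :=
        Finset.card_le_card hsub
    _ ≤ ({w, y, z} : Finset P).card + (g2.erase q).card + (g3.erase r).card := by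
        have := Finset.card_union_le (({w, y, z} : Finset P) ∪ (g2.erase q)) (g3.erase r)
        have := Finset.card_union_le ({w, y, z} : Finset P) (g2.erase q)
        omega
    _ ≤ 2 * α + 1 := by
        have h1 : ({w, y, z} : Finset P).card ≤ 3 := by
          apply le_trans (Finset.card_insert_le _ _)
          have := Finset.card_insert_le y ({z} : Finset P)
          simp at this ⊢
          omega
        have h2 : (g2.erase q).card = α - 1 := by
          rw [Finset.card_erase_of_mem hq, hg2card]
        have h3 : (g3.erase r).card = α - 1 := by
          rw [Finset.card_erase_of_mem hr, hg3card]
        omega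
end

section
/- Let (P,G,B) be a transversal design TD(3,5). Then: (i) for every 1 ≤ i ≤ 12 and every set of i distinct blocks of B, the union of these blocks contains at least i points; and (ii) there exists a set of 13 distinct blocks of B whose union contains at most 12 points. -/
section Aux
variable {P : Type*} [Fintype P] [DecidableEq P]
variable {Gr B : Finset (Finset P)}

/-- uniqueness of block through two points of distinct groups -/
lemma TD_uniq (hTD : IsTransversalDesign 3 5 Gr B) {g₁ g₂ : Finset P} (hg₁ : g₁ ∈ Gr) (hg₂ : g₂ ∈ Gr) (hne : g₁ ≠ g₂)
    {p q : P} (hp : p ∈ g₁) (hq : q ∈ g₂)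
    {b b' : Finset P} (hb : b ∈ B) (hb' : b' ∈ B)
    (hpb : p ∈ b) (hqb : q ∈ b) (hpb' : p ∈ b') (hqb' : q ∈ b') : b = b' := by
  obtain ⟨c, -, hu⟩ := hTD.pairs_covered p q g₁ hg₁ g₂ hg₂ hne hp hq
  rw [hu b ⟨hb, hpb, hqb⟩, hu b' ⟨hb', hpb', hqb'⟩]

lemma TD_pt_exists (hTD : IsTransversalDesign 3 5 Gr B) {b : Finset P} (hb : b ∈ B) {g : Finset P} (hg : g ∈ Gr) :
    ∃ p, b ∩ g = {p} :=
  Finset.card_eq_one.mp (hTD.block_meets_group b hb g hg)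

/-- the core counting lemma -/
lemma TD_core (hTD : IsTransversalDesign 3 5 Gr B) {g₁ g₂ g₃ : Finset P} (hg₁ : g₁ ∈ Gr) (hg₂ : g₂ ∈ Gr) (hg₃ : g₃ ∈ Gr)
    (h12 : g₁ ≠ g₂) (h13 : g₁ ≠ g₃) (h23 : g₂ ≠ g₃)
    {S : Finset (Finset P)} (hS : S ⊆ B) :
    S.card + (5 - (g₃ ∩ S.sup id).card) *
        ((g₁ ∩ S.sup id).card + (g₂ ∩ S.sup id).card - 5)
      ≤ (g₁ ∩ S.sup id).card * (g₂ ∩ S.sup id).card := by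
  classical
  have hPne : Nonempty P := by
    have h15 := hTD.card_points
    exact Fintype.card_pos_iff.mp (by omega)
  set U := S.sup id with hU
  set A₁ := g₁ ∩ U with hA₁
  set A₂ := g₂ ∩ U with hA₂
  set A₃ := g₃ ∩ U with hA₃
  set Pr := A₁ ×ˢ A₂ with hPr
  set Bad := Pr.filter (fun pq => ∃ b ∈ B, pq.1 ∈ b ∧ pq.2 ∈ b ∧ ¬ b ⊆ U) with hBad
  have hBadPr : Bad ⊆ Pr := Finset.filter_subset _ _
  -- choice of the g₁- and g₂-points of a block
  have hc1 : ∀ b : Finset P, ∃ p, b ∈ B → b ∩ g₁ = {p} := by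
    intro b
    by_cases hb : b ∈ B
    · obtain ⟨p, hp⟩ := TD_pt_exists hTD hb hg₁
      exact ⟨p, fun _ => hp⟩
    · exact ⟨Classical.arbitrary P, fun h => absurd h hb⟩
  choose p₁ hp₁ using hc1
  have hc2 : ∀ b : Finset P, ∃ p, b ∈ B → b ∩ g₂ = {p} := by
    intro b
    by_cases hb : b ∈ B
    · obtain ⟨p, hp⟩ := TD_pt_exists hTD hb hg₂
      exact ⟨p, fun _ => hp⟩
    · exact ⟨Classical.arbitrary P, fun h => absurd h hb⟩
  choose p₂ hp₂ using hc2
  have hm1 : ∀ b ∈ B, p₁ b ∈ b ∧ p₁ b ∈ g₁ := by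
    intro b hb
    have : p₁ b ∈ b ∩ g₁ := by rw [hp₁ b hb]; exact Finset.mem_singleton_self _
    exact ⟨(Finset.mem_inter.mp this).1, (Finset.mem_inter.mp this).2⟩
  have hm2 : ∀ b ∈ B, p₂ b ∈ b ∧ p₂ b ∈ g₂ := by
    intro b hb
    have : p₂ b ∈ b ∩ g₂ := by rw [hp₂ b hb]; exact Finset.mem_singleton_self _
    exact ⟨(Finset.mem_inter.mp this).1, (Finset.mem_inter.mp this).2⟩
  -- S injects into Pr \ Bad
  have hinj : S.card ≤ (Pr \ Bad).card := by
    apply Finset.card_le_card_of_injOn (fun b => (p₁ b, p₂ b))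
    · intro b hb
      have hbB := hS hb
      have hbU : b ⊆ U := Finset.le_sup (f := id) hb
      obtain ⟨h1b, h1g⟩ := hm1 b hbB
      obtain ⟨h2b, h2g⟩ := hm2 b hbB
      rw [Finset.mem_coe, Finset.mem_sdiff]
      refine ⟨Finset.mem_product.mpr ⟨Finset.mem_inter.mpr ⟨h1g, hbU h1b⟩,
        Finset.mem_inter.mpr ⟨h2g, hbU h2b⟩⟩, ?_⟩
      intro hbad
      rw [hBad, Finset.mem_filter] at hbad
      obtain ⟨-, b', hb', hpb', hqb', hnb'⟩ := hbad
      exact hnb' ((TD_uniq hTD hg₁ hg₂ h12 h1g h2g hb' hbB hpb' hqb' h1b h2b) ▸ hbU)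
    · intro b hb b' hb' heq
      simp only [Prod.mk.injEq] at heq
      obtain ⟨h1b, h1g⟩ := hm1 b (hS hb)
      obtain ⟨h2b, h2g⟩ := hm2 b (hS hb)
      obtain ⟨h1b', -⟩ := hm1 b' (hS hb')
      obtain ⟨h2b', -⟩ := hm2 b' (hS hb')
      exact TD_uniq hTD hg₁ hg₂ h12 h1g h2g (hS hb) (hS hb') h1b h2b
        (heq.1 ▸ h1b') (heq.2 ▸ h2b')
  -- the fibers over missing third points
  set F := fun z : P => Pr.filter (fun pq => ∃ b ∈ B, pq.1 ∈ b ∧ pq.2 ∈ b ∧ z ∈ b)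
    with hF
  have hFsub : ∀ z ∈ g₃ \ U, F z ⊆ Bad := by
    intro z hz pq hpq
    rw [hF, Finset.mem_filter] at hpq
    obtain ⟨hpqPr, b, hbB, h1, h2, hzb⟩ := hpq
    rw [hBad, Finset.mem_filter]
    exact ⟨hpqPr, b, hbB, h1, h2, fun hsub => (Finset.mem_sdiff.mp hz).2 (hsub hzb)⟩
  have hFdisj : ∀ z ∈ g₃ \ U, ∀ z' ∈ g₃ \ U, z ≠ z' → Disjoint (F z) (F z') := by
    intro z hz z' hz' hne
    rw [Finset.disjoint_left]
    intro pq hpq hpq'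
    rw [hF, Finset.mem_filter] at hpq hpq'
    obtain ⟨hpqPr, b, hbB, h1, h2, hzb⟩ := hpq
    obtain ⟨-, b', hbB', h1', h2', hzb'⟩ := hpq'
    have hp1 : pq.1 ∈ g₁ := (Finset.mem_inter.mp (Finset.mem_product.mp hpqPr).1).1
    have hp2 : pq.2 ∈ g₂ := (Finset.mem_inter.mp (Finset.mem_product.mp hpqPr).2).1
    have hbb : b = b' := TD_uniq hTD hg₁ hg₂ h12 hp1 hp2 hbB hbB' h1 h2 h1' h2'
    obtain ⟨w, hw⟩ := TD_pt_exists hTD hbB hg₃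
    have e1 : z ∈ b ∩ g₃ := Finset.mem_inter.mpr ⟨hzb, (Finset.mem_sdiff.mp hz).1⟩
    have e2 : z' ∈ b ∩ g₃ :=
      Finset.mem_inter.mpr ⟨hbb ▸ hzb', (Finset.mem_sdiff.mp hz').1⟩
    rw [hw, Finset.mem_singleton] at e1 e2
    exact hne (e1.trans e2.symm)
  -- each fiber has at least a₁ + a₂ - 5 elements
  have hA2g : A₂ ⊆ g₂ := Finset.inter_subset_left
  have hA2le : A₂.card ≤ 5 := by
    have := Finset.card_le_card hA2g
    rw [hTD.group_card g₂ hg₂] at this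
    exact this
  have hFz : ∀ z ∈ g₃, A₁.card + A₂.card - 5 ≤ (F z).card := by
    intro z hz
    have hcθ : ∀ p : P, ∃ q, p ∈ g₁ → (q ∈ g₂ ∧ ∃ b ∈ B, p ∈ b ∧ z ∈ b ∧ q ∈ b) := by
      intro p
      by_cases hp : p ∈ g₁
      · obtain ⟨b, ⟨hbB, hpb, hzb⟩, -⟩ :=
          hTD.pairs_covered p z g₁ hg₁ g₃ hg₃ h13 hp hz
        obtain ⟨q, hq⟩ := TD_pt_exists hTD hbB hg₂
        have hqm : q ∈ b ∩ g₂ := by rw [hq]; exact Finset.mem_singleton_self _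
        exact ⟨q, fun _ => ⟨(Finset.mem_inter.mp hqm).2, b, hbB, hpb, hzb,
          (Finset.mem_inter.mp hqm).1⟩⟩
      · exact ⟨Classical.arbitrary P, fun h => absurd h hp⟩
    choose θ hθ using hcθ
    have hθinj : ∀ p ∈ g₁, ∀ p' ∈ g₁, θ p = θ p' → p = p' := by
      intro p hp p' hp' he
      obtain ⟨hqg, b, hbB, hpb, hzb, hqb⟩ := hθ p hp
      obtain ⟨hqg', b', hbB', hpb', hzb', hqb'⟩ := hθ p' hp'
      have hbb : b = b' :=
        TD_uniq hTD hg₂ hg₃ h23 hqg hz hbB hbB' hqb hzb (he ▸ hqb') hzb'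
      obtain ⟨w, hw⟩ := TD_pt_exists hTD hbB hg₁
      have e1 : p ∈ b ∩ g₁ := Finset.mem_inter.mpr ⟨hpb, hp⟩
      have e2 : p' ∈ b ∩ g₁ := Finset.mem_inter.mpr ⟨hbb ▸ hpb', hp'⟩
      rw [hw, Finset.mem_singleton] at e1 e2
      exact e1.trans e2.symm
    have hsub1 : ∀ p ∈ A₁, p ∈ g₁ := fun p hp => (Finset.mem_inter.mp hp).1
    have h1 : (A₁.filter (fun p => θ p ∈ A₂)).card ≤ (F z).card := by
      apply Finset.card_le_card_of_injOn (fun p => (p, θ p))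
      · intro p hp
        rw [Finset.mem_coe, Finset.mem_filter] at hp
        obtain ⟨hqg, b, hbB, hpb, hzb, hqb⟩ := hθ p (hsub1 p hp.1)
        rw [Finset.mem_coe, hF, Finset.mem_filter]
        exact ⟨Finset.mem_product.mpr ⟨hp.1, hp.2⟩, b, hbB, hpb, hqb, hzb⟩
      · intro p hp p' hp' he
        simpa using congrArg Prod.fst he
    have h2 : (A₁.filter (fun p => ¬ θ p ∈ A₂)).card ≤ (g₂ \ A₂).card := by
      apply Finset.card_le_card_of_injOn θ
      · intro p hp
        rw [Finset.mem_coe, Finset.mem_filter] at hp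
        exact Finset.mem_sdiff.mpr ⟨(hθ p (hsub1 p hp.1)).1, hp.2⟩
      · intro p hp p' hp' he
        exact hθinj p (hsub1 p (Finset.mem_filter.mp hp).1)
          p' (hsub1 p' (Finset.mem_filter.mp hp').1) he
    have h3 := Finset.card_filter_add_card_filter_not
      (s := A₁) (p := fun p => θ p ∈ A₂)
    have h4 : (g₂ \ A₂).card + A₂.card = 5 := by
      rw [Finset.card_sdiff_add_card_eq_card hA2g, hTD.group_card g₂ hg₂]
    omega
  -- summing up
  have hbig : (g₃ \ U).card * (A₁.card + A₂.card - 5) ≤ Bad.card := by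
    calc (g₃ \ U).card * (A₁.card + A₂.card - 5)
        = ∑ _z ∈ g₃ \ U, (A₁.card + A₂.card - 5) := by
          rw [Finset.sum_const, smul_eq_mul]
      _ ≤ ∑ z ∈ g₃ \ U, (F z).card :=
          Finset.sum_le_sum (fun z hz => hFz z (Finset.mem_sdiff.mp hz).1)
      _ = ((g₃ \ U).biUnion F).card := (Finset.card_biUnion hFdisj).symm
      _ ≤ Bad.card := Finset.card_le_card (Finset.biUnion_subset.mpr hFsub)
  have hg3c : (g₃ \ U).card + A₃.card = 5 := by
    have hsub : A₃ ⊆ g₃ := Finset.inter_subset_left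
    have : g₃ \ A₃ = g₃ \ U := by
      rw [hA₃, Finset.sdiff_inter_self_left]
    rw [← this, Finset.card_sdiff_add_card_eq_card hsub, hTD.group_card g₃ hg₃]
  have hfin : (Pr \ Bad).card + Bad.card = Pr.card :=
    Finset.card_sdiff_add_card_eq_card hBadPr
  have hPrc : Pr.card = A₁.card * A₂.card := Finset.card_product A₁ A₂
  have h5c : 5 - A₃.card = (g₃ \ U).card := by omega
  calc S.card + (5 - A₃.card) * (A₁.card + A₂.card - 5)
      = S.card + (g₃ \ U).card * (A₁.card + A₂.card - 5) := by rw [h5c]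
    _ ≤ (Pr \ Bad).card + Bad.card := Nat.add_le_add hinj hbig
    _ = A₁.card * A₂.card := by rw [hfin, hPrc]

lemma TD_nonempty (hTD : IsTransversalDesign 3 5 Gr B) : Nonempty P := by
  have h15 := hTD.card_points
  exact Fintype.card_pos_iff.mp (by omega)

lemma TD_card_through (hTD : IsTransversalDesign 3 5 Gr B)
    {g g' : Finset P} (hg : g ∈ Gr) (hg' : g' ∈ Gr) (hne : g ≠ g')
    {x : P} (hx : x ∈ g) :
    (B.filter (fun b => x ∈ b)).card = 5 := by
  classical
  have hPne := TD_nonempty hTD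
  have hch : ∀ b : Finset P, ∃ q, b ∈ B → (q ∈ b ∧ q ∈ g') := by
    intro b
    by_cases hb : b ∈ B
    · obtain ⟨q, hq⟩ := TD_pt_exists hTD hb hg'
      have : q ∈ b ∩ g' := by rw [hq]; exact Finset.mem_singleton_self _
      exact ⟨q, fun _ => ⟨(Finset.mem_inter.mp this).1, (Finset.mem_inter.mp this).2⟩⟩
    · exact ⟨Classical.arbitrary P, fun h => absurd h hb⟩
  choose σ hσ using hch
  rw [← hTD.group_card g' hg']
  apply Finset.card_bij (fun b _ => σ b)
  · intro b hb
    exact (hσ b (Finset.mem_filter.mp hb).1).2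
  · intro b hb b' hb' he
    have hbB := (Finset.mem_filter.mp hb).1
    have hbB' := (Finset.mem_filter.mp hb').1
    exact TD_uniq hTD hg hg' hne hx (hσ b hbB).2 hbB hbB'
      (Finset.mem_filter.mp hb).2 (hσ b hbB).1
      (Finset.mem_filter.mp hb').2 (he ▸ (hσ b' hbB').1)
  · intro q hq
    obtain ⟨b, ⟨hbB, hxb, hqb⟩, -⟩ :=
      hTD.pairs_covered x q g hg g' hg' hne hx hq
    refine ⟨b, Finset.mem_filter.mpr ⟨hbB, hxb⟩, ?_⟩
    obtain ⟨w, hw⟩ := TD_pt_exists hTD hbB hg'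
    have h1 : σ b ∈ b ∩ g' := Finset.mem_inter.mpr ⟨(hσ b hbB).1, (hσ b hbB).2⟩
    have h2 : q ∈ b ∩ g' := Finset.mem_inter.mpr ⟨hqb, hq⟩
    rw [hw, Finset.mem_singleton] at h1 h2
    exact h1.trans h2.symm

lemma TD_card_pair (hTD : IsTransversalDesign 3 5 Gr B)
    {g g' : Finset P} (hg : g ∈ Gr) (hg' : g' ∈ Gr) (hne : g ≠ g')
    {x y : P} (hx : x ∈ g) (hy : y ∈ g') :
    (B.filter (fun b => x ∈ b ∧ y ∈ b)).card = 1 := by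
  classical
  obtain ⟨b0, ⟨hb0B, hxb0, hyb0⟩, hu⟩ := hTD.pairs_covered x y g hg g' hg' hne hx hy
  rw [Finset.card_eq_one]
  refine ⟨b0, ?_⟩
  ext b
  simp only [Finset.mem_filter, Finset.mem_singleton]
  constructor
  · intro ⟨hbB, hxb, hyb⟩
    exact hu b ⟨hbB, hxb, hyb⟩
  · rintro rfl
    exact ⟨hb0B, hxb0, hyb0⟩

lemma TD_B_card (hTD : IsTransversalDesign 3 5 Gr B)
    {g g' : Finset P} (hg : g ∈ Gr) (hg' : g' ∈ Gr) (hne : g ≠ g') :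
    B.card = 25 := by
  classical
  have hcover : B = g.biUnion (fun x => B.filter (fun b => x ∈ b)) := by
    ext b
    simp only [Finset.mem_biUnion, Finset.mem_filter]
    constructor
    · intro hb
      obtain ⟨x, hx⟩ := TD_pt_exists hTD hb hg
      have : x ∈ b ∩ g := by rw [hx]; exact Finset.mem_singleton_self _
      exact ⟨x, (Finset.mem_inter.mp this).2, hb, (Finset.mem_inter.mp this).1⟩
    · rintro ⟨x, -, hb, -⟩
      exact hb
  have hdisj : ∀ x ∈ g, ∀ x' ∈ g, x ≠ x' →
      Disjoint (B.filter (fun b => x ∈ b)) (B.filter (fun b => x' ∈ b)) := by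
    intro x hx x' hx' hne'
    rw [Finset.disjoint_left]
    intro b hb hb'
    obtain ⟨w, hw⟩ := TD_pt_exists hTD (Finset.mem_filter.mp hb).1 hg
    have h1 : x ∈ b ∩ g := Finset.mem_inter.mpr ⟨(Finset.mem_filter.mp hb).2, hx⟩
    have h2 : x' ∈ b ∩ g := Finset.mem_inter.mpr ⟨(Finset.mem_filter.mp hb').2, hx'⟩
    rw [hw, Finset.mem_singleton] at h1 h2
    exact hne' (h1.trans h2.symm)
  rw [hcover, Finset.card_biUnion hdisj]
  rw [Finset.sum_congr rfl (fun x hx => TD_card_through hTD hg hg' hne hx)]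
  rw [Finset.sum_const, smul_eq_mul, hTD.group_card g hg]

end Aux

/-- In a `TD(3,5)`: (i) any `i` distinct blocks, `1 ≤ i ≤ 12`, cover at least
`i` points, and (ii) there exist `13` distinct blocks covering at most `12`
points. -/
theorem td3_5_batch_parameter {P : Type*} [Fintype P] [DecidableEq P]
    (Gr B : Finset (Finset P)) (hTD : IsTransversalDesign 3 5 Gr B) :
    (∀ S : Finset (Finset P), S ⊆ B → 1 ≤ S.card → S.card ≤ 12 →
      S.card ≤ (S.sup id).card) ∧
    (∃ S : Finset (Finset P), S ⊆ B ∧ S.card = 13 ∧ (S.sup id).card ≤ 12) := by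
  classical
  obtain ⟨g₁, g₂, g₃, h12, h13, h23, hGr⟩ := Finset.card_eq_three.mp hTD.card_groups
  have hg₁ : g₁ ∈ Gr := by rw [hGr]; simp
  have hg₂ : g₂ ∈ Gr := by rw [hGr]; simp
  have hg₃ : g₃ ∈ Gr := by rw [hGr]; simp
  have hd12 : Disjoint g₁ g₂ := hTD.groups_disjoint g₁ hg₁ g₂ hg₂ h12
  have hd13 : Disjoint g₁ g₃ := hTD.groups_disjoint g₁ hg₁ g₃ hg₃ h13
  have hd23 : Disjoint g₂ g₃ := hTD.groups_disjoint g₂ hg₂ g₃ hg₃ h23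
  constructor
  · -- part (i)
    intro S hS hone htwelve
    by_contra hlt
    push_neg at hlt
    have hdecomp : (S.sup id).card =
        (g₁ ∩ S.sup id).card + (g₂ ∩ S.sup id).card + (g₃ ∩ S.sup id).card := by
      have hcov : S.sup id = (g₁ ∩ S.sup id) ∪ (g₂ ∩ S.sup id) ∪ (g₃ ∩ S.sup id) := by
        ext p
        simp only [Finset.mem_union, Finset.mem_inter]
        constructor
        · intro hp
          obtain ⟨g, hg, hpg⟩ := hTD.groups_cover p
          rw [hGr] at hg
          simp only [Finset.mem_insert, Finset.mem_singleton] at hg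
          rcases hg with rfl | rfl | rfl
          · exact Or.inl (Or.inl ⟨hpg, hp⟩)
          · exact Or.inl (Or.inr ⟨hpg, hp⟩)
          · exact Or.inr ⟨hpg, hp⟩
        · rintro ((⟨-, hp⟩ | ⟨-, hp⟩) | ⟨-, hp⟩) <;> exact hp
      have d1 : Disjoint (g₁ ∩ S.sup id) (g₂ ∩ S.sup id) :=
        hd12.mono Finset.inter_subset_left Finset.inter_subset_left
      have d2 : Disjoint (g₁ ∩ S.sup id ∪ g₂ ∩ S.sup id) (g₃ ∩ S.sup id) :=
        Finset.disjoint_union_left.mpr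
          ⟨hd13.mono Finset.inter_subset_left Finset.inter_subset_left,
           hd23.mono Finset.inter_subset_left Finset.inter_subset_left⟩
      conv_lhs => rw [hcov]
      rw [Finset.card_union_of_disjoint d2, Finset.card_union_of_disjoint d1]
    have hb₁ : (g₁ ∩ S.sup id).card ≤ 5 := by
      have h : (g₁ ∩ S.sup id).card ≤ g₁.card :=
        Finset.card_le_card Finset.inter_subset_left
      rwa [hTD.group_card g₁ hg₁] at h
    have hb₂ : (g₂ ∩ S.sup id).card ≤ 5 := by
      have h : (g₂ ∩ S.sup id).card ≤ g₂.card :=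
        Finset.card_le_card Finset.inter_subset_left
      rwa [hTD.group_card g₂ hg₂] at h
    have hb₃ : (g₃ ∩ S.sup id).card ≤ 5 := by
      have h : (g₃ ∩ S.sup id).card ≤ g₃.card :=
        Finset.card_le_card Finset.inter_subset_left
      rwa [hTD.group_card g₃ hg₃] at h
    have c1 := TD_core hTD hg₁ hg₂ hg₃ h12 h13 h23 hS
    have c2 := TD_core hTD hg₂ hg₃ hg₁ h23 h12.symm h13.symm hS
    have c3 := TD_core hTD hg₃ hg₁ hg₂ h13.symm h23.symm h12 hS
    obtain ⟨n₁, hn₁⟩ : ∃ n, (g₁ ∩ S.sup id).card = n := ⟨_, rfl⟩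
    obtain ⟨n₂, hn₂⟩ : ∃ n, (g₂ ∩ S.sup id).card = n := ⟨_, rfl⟩
    obtain ⟨n₃, hn₃⟩ : ∃ n, (g₃ ∩ S.sup id).card = n := ⟨_, rfl⟩
    rw [hn₁, hn₂, hn₃] at c1 c2 c3 hdecomp
    rw [hn₁] at hb₁
    rw [hn₂] at hb₂
    rw [hn₃] at hb₃
    rw [hdecomp] at hlt
    interval_cases n₁ <;> interval_cases n₂ <;> interval_cases n₃ <;> omega
  · -- part (ii)
    have hx' : g₁.Nonempty := by
      rw [← Finset.card_pos, hTD.group_card g₁ hg₁]; norm_num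
    obtain ⟨x, hx⟩ := hx'
    have hy' : g₂.Nonempty := by
      rw [← Finset.card_pos, hTD.group_card g₂ hg₂]; norm_num
    obtain ⟨y, hy⟩ := hy'
    obtain ⟨b0, ⟨hb0B, hxb0, hyb0⟩, hb0u⟩ :=
      hTD.pairs_covered x y g₁ hg₁ g₂ hg₂ h12 hx hy
    obtain ⟨w, hw⟩ := TD_pt_exists hTD hb0B hg₃
    have hz' : (g₃ \ {w}).Nonempty := by
      rw [← Finset.card_pos]
      have h1 := Finset.le_card_sdiff ({w} : Finset P) g₃
      have h2 : ({w} : Finset P).card = 1 := Finset.card_singleton w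
      have h3 := hTD.group_card g₃ hg₃
      omega
    obtain ⟨z, hz'⟩ := hz'
    rw [Finset.mem_sdiff, Finset.mem_singleton] at hz'
    obtain ⟨hz, hzw⟩ := hz'
    set Bx := B.filter (fun b => x ∈ b) with hBx
    set By := B.filter (fun b => y ∈ b) with hBy
    set Bz := B.filter (fun b => z ∈ b) with hBz
    refine ⟨B \ (Bx ∪ By ∪ Bz), Finset.sdiff_subset, ?_, ?_⟩
    · -- card = 13
      have hcBx : Bx.card = 5 := TD_card_through hTD hg₁ hg₂ h12 hx
      have hcBy : By.card = 5 := TD_card_through hTD hg₂ hg₃ h23 hy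
      have hcBz : Bz.card = 5 := TD_card_through hTD hg₃ hg₁ h13.symm hz
      have hxy : (Bx ∩ By).card = 1 := by
        rw [hBx, hBy, ← Finset.filter_and]
        exact TD_card_pair hTD hg₁ hg₂ h12 hx hy
      have hxz : (Bx ∩ Bz).card = 1 := by
        rw [hBx, hBz, ← Finset.filter_and]
        exact TD_card_pair hTD hg₁ hg₃ h13 hx hz
      have hyz : (By ∩ Bz).card = 1 := by
        rw [hBy, hBz, ← Finset.filter_and]
        exact TD_card_pair hTD hg₂ hg₃ h23 hy hz
      have htriple : (Bx ∩ By) ∩ Bz = ∅ := by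
        rw [Finset.eq_empty_iff_forall_notMem]
        intro b hb
        rw [Finset.mem_inter, Finset.mem_inter, hBx, hBy, hBz,
          Finset.mem_filter, Finset.mem_filter, Finset.mem_filter] at hb
        obtain ⟨⟨⟨hbB, hxb⟩, -, hyb⟩, -, hzb⟩ := hb
        have : b = b0 := by
          rw [hb0u b ⟨hbB, hxb, hyb⟩]
        subst this
        have : z ∈ b ∩ g₃ := Finset.mem_inter.mpr ⟨hzb, hz⟩
        rw [hw, Finset.mem_singleton] at this
        exact hzw this
      have hu2 : (Bx ∪ By).card = 9 := by
        have := Finset.card_union_add_card_inter Bx By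
        omega
      have hint : ((Bx ∪ By) ∩ Bz).card = 2 := by
        rw [Finset.union_inter_distrib_right]
        have h0 : ((Bx ∩ Bz) ∩ (By ∩ Bz)).card = 0 := by
          rw [Finset.card_eq_zero, Finset.eq_empty_iff_forall_notMem]
          intro b hb
          simp only [Finset.mem_inter] at hb
          have : b ∈ (Bx ∩ By) ∩ Bz :=
            Finset.mem_inter.mpr ⟨Finset.mem_inter.mpr ⟨hb.1.1, hb.2.1⟩, hb.1.2⟩
          rw [htriple] at this
          exact Finset.notMem_empty b this
        have := Finset.card_union_add_card_inter (Bx ∩ Bz) (By ∩ Bz)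
        omega
      have hu3 : (Bx ∪ By ∪ Bz).card = 12 := by
        have := Finset.card_union_add_card_inter (Bx ∪ By) Bz
        omega
      have hsubB : Bx ∪ By ∪ Bz ⊆ B := by
        intro b hb
        simp only [Finset.mem_union, hBx, hBy, hBz, Finset.mem_filter] at hb
        rcases hb with (h | h) | h <;> exact h.1
      rw [Finset.card_sdiff_of_subset hsubB, hu3, TD_B_card hTD hg₁ hg₂ h12]
    · -- union has at most 12 points
      have hxyne : x ≠ y := fun h => Finset.disjoint_left.mp hd12 hx (h ▸ hy)
      have hxzne : x ≠ z := fun h => Finset.disjoint_left.mp hd13 hx (h ▸ hz)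
      have hyzne : y ≠ z := fun h => Finset.disjoint_left.mp hd23 hy (h ▸ hz)
      have hsub : ((B \ (Bx ∪ By ∪ Bz)).sup id : Finset P) ⊆
          Finset.univ \ {x, y, z} := by
        intro p hp
        rw [Finset.mem_sup] at hp
        obtain ⟨b, hbS, hpb⟩ := hp
        rw [Finset.mem_sdiff] at hbS
        obtain ⟨hbB, hbn⟩ := hbS
        simp only [Finset.mem_union, hBx, hBy, hBz, Finset.mem_filter,
          not_or] at hbn
        rw [Finset.mem_sdiff, Finset.mem_insert, Finset.mem_insert,
          Finset.mem_singleton]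
        refine ⟨Finset.mem_univ p, ?_⟩
        push_neg
        obtain ⟨⟨hnx, hny⟩, hnz⟩ := hbn
        refine ⟨?_, ?_, ?_⟩
        · rintro rfl; exact hnx ⟨hbB, hpb⟩
        · rintro rfl; exact hny ⟨hbB, hpb⟩
        · rintro rfl; exact hnz ⟨hbB, hpb⟩
      have hcard3 : ({x, y, z} : Finset P).card = 3 := by
        rw [Finset.card_insert_of_notMem (by simp [hxyne, hxzne]),
          Finset.card_insert_of_notMem (by simp [hyzne]),
          Finset.card_singleton]
      have := Finset.card_le_card hsub
      rw [Finset.card_sdiff_of_subset (Finset.subset_univ _), Finset.card_univ,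
        hTD.card_points, hcard3] at this
      omega
end

section
/- Let (X,B) be an affine plane of order q. Then for every 1 ≤ i ≤ q² and every set of i distinct blocks of B, the union of these blocks contains at least i points. -/
/-- An affine plane of order `s`: `X` is a set of `s²` points and `B` is a
collection of `s(s+1)` blocks, each of size `s`, such that any two distinct
points lie together in exactly one block. -/
structure IsAffinePlane {X : Type*} [Fintype X] [DecidableEq X]
    (s : ℕ) (B : Finset (Finset X)) : Prop where
  card_points : Fintype.card X = s ^ 2
  card_blocks : B.card = s * (s + 1)
  block_card : ∀ b ∈ B, b.card = s
  pairs_covered : ∀ p q : X, p ≠ q → ∃! b, b ∈ B ∧ p ∈ b ∧ q ∈ b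

lemma AP_filter_pair {X : Type*} [Fintype X] [DecidableEq X]
    {q : ℕ} {B : Finset (Finset X)} (hAP : IsAffinePlane q B)
    {p p' : X} (h : p ≠ p') :
    (B.filter (fun b => p ∈ b ∧ p' ∈ b)).card = 1 := by
  obtain ⟨b, hb, hub⟩ := hAP.pairs_covered p p' h
  rw [Finset.card_eq_one]
  refine ⟨b, ?_⟩
  ext c
  simp only [Finset.mem_filter, Finset.mem_singleton]
  constructor
  · intro hc; exact hub c ⟨hc.1, hc.2⟩
  · intro hc; subst hc; exact ⟨hb.1, hb.2.1, hb.2.2⟩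

lemma AP_filter_point {X : Type*} [Fintype X] [DecidableEq X]
    {q : ℕ} {B : Finset (Finset X)} (hAP : IsAffinePlane q B) (hq : 2 ≤ q)
    (p : X) : (B.filter (fun b => p ∈ b)).card = q + 1 := by
  set F := B.filter (fun b => p ∈ b) with hF
  have hdisj : ∀ b₁ ∈ F, ∀ b₂ ∈ F, b₁ ≠ b₂ →
      Disjoint (b₁.erase p) (b₂.erase p) := by
    intro b₁ h₁ b₂ h₂ hne
    rw [Finset.disjoint_left]
    intro x hx₁ hx₂
    simp only [hF, Finset.mem_filter] at h₁ h₂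
    rw [Finset.mem_erase] at hx₁ hx₂
    obtain ⟨b, hb, hub⟩ := hAP.pairs_covered p x (Ne.symm hx₁.1)
    exact hne ((hub b₁ ⟨h₁.1, h₁.2, hx₁.2⟩).trans (hub b₂ ⟨h₂.1, h₂.2, hx₂.2⟩).symm)
  have hcover : F.biUnion (fun b => b.erase p) = Finset.univ.erase p := by
    ext x
    simp only [Finset.mem_biUnion, Finset.mem_erase, Finset.mem_univ, and_true, hF,
      Finset.mem_filter]
    constructor
    · rintro ⟨b, _, hx, _⟩; exact hx
    · intro hx
      obtain ⟨b, hb, -⟩ := hAP.pairs_covered p x (Ne.symm hx)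
      exact ⟨b, ⟨hb.1, hb.2.1⟩, hx, hb.2.2⟩
  have hcard := Finset.card_biUnion hdisj
  rw [hcover] at hcard
  have h1 : (Finset.univ.erase p).card = q ^ 2 - 1 := by
    rw [Finset.card_erase_of_mem (Finset.mem_univ p), Finset.card_univ, hAP.card_points]
  have h2 : ∀ b ∈ F, (b.erase p).card = q - 1 := by
    intro b hb
    simp only [hF, Finset.mem_filter] at hb
    rw [Finset.card_erase_of_mem hb.2, hAP.block_card b hb.1]
  rw [h1, Finset.sum_congr rfl h2, Finset.sum_const, smul_eq_mul] at hcard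
  have key : (q + 1) * (q - 1) = q ^ 2 - 1 := by
    have ha : 1 ≤ q := by omega
    have hb : 1 ≤ q ^ 2 := Nat.one_le_pow 2 q (by omega)
    zify [ha, hb]
    ring
  have hpos : 0 < q - 1 := by omega
  exact Nat.eq_of_mul_eq_mul_right hpos (hcard.symm.trans key.symm)

/-- In an affine plane of order `q`, any `i` distinct blocks, `1 ≤ i ≤ q²`,
cover at least `i` points. -/
theorem affine_plane_hall {X : Type*} [Fintype X] [DecidableEq X]
    (q : ℕ) (B : Finset (Finset X)) (hAP : IsAffinePlane q B) :
    ∀ S : Finset (Finset X), S ⊆ B → 1 ≤ S.card → S.card ≤ q ^ 2 →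
      S.card ≤ (S.sup id).card := by
  intro S hSB h1 hq2
  have hsq : q ^ 2 = q * q := by ring
  rcases Nat.lt_or_ge q 2 with hq | hq
  · -- q ≤ 1, so S.card = 1 and it suffices that blocks are nonempty
    have hS1 : S.card = 1 := by
      have : q ^ 2 ≤ 1 := by interval_cases q <;> norm_num
      omega
    obtain ⟨b, hb⟩ := Finset.card_eq_one.mp hS1
    subst hb
    simp only [Finset.sup_singleton, id, Finset.card_singleton]
    have hbB : b ∈ B := hSB (Finset.mem_singleton_self b)
    have hbq : b.card = q := hAP.block_card b hbB
    have hq1 : 1 ≤ q := by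
      rcases Nat.eq_zero_or_pos q with h0 | h0
      · subst h0; simp at hq2
      · exact h0
    omega
  · -- main case q ≥ 2
    set U := S.sup id with hU
    by_contra hcon
    push_neg at hcon
    have hUsub : ∀ b ∈ S, b ⊆ U := fun b hb => Finset.le_sup (f := id) hb
    have hq2q : 2 * q ≤ q * q := Nat.mul_le_mul_right q hq
    have hqq : 0 < q * q - q := by omega
    rcases Nat.lt_or_ge U.card (q ^ 2 - q + 2) with hcase | hcase
    · -- pair counting
      have hdisj : ∀ b₁ ∈ S, ∀ b₂ ∈ S, b₁ ≠ b₂ →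
          Disjoint b₁.offDiag b₂.offDiag := by
        intro b₁ h₁ b₂ h₂ hne
        rw [Finset.disjoint_left]
        rintro ⟨x, y⟩ hx₁ hx₂
        rw [Finset.mem_offDiag] at hx₁ hx₂
        obtain ⟨b, hb, hub⟩ := hAP.pairs_covered x y hx₁.2.2
        exact hne ((hub b₁ ⟨hSB h₁, hx₁.1, hx₁.2.1⟩).trans
          (hub b₂ ⟨hSB h₂, hx₂.1, hx₂.2.1⟩).symm)
      have hsub : S.biUnion (fun b => b.offDiag) ⊆ U.offDiag := by
        intro x hx
        rw [Finset.mem_biUnion] at hx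
        obtain ⟨b, hb, hxb⟩ := hx
        rw [Finset.mem_offDiag] at hxb ⊢
        exact ⟨hUsub b hb hxb.1, hUsub b hb hxb.2.1, hxb.2.2⟩
      have hle := Finset.card_le_card hsub
      rw [Finset.card_biUnion hdisj] at hle
      have heach : ∀ b ∈ S, b.offDiag.card = q * q - q := by
        intro b hb
        rw [Finset.offDiag_card, hAP.block_card b (hSB hb)]
      rw [Finset.sum_congr rfl heach, Finset.sum_const, smul_eq_mul,
        Finset.offDiag_card] at hle
      -- hle : S.card * (q*q - q) ≤ U.card * U.card - U.card
      have hm1 : U.card * U.card - U.card = U.card * (U.card - 1) := by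
        rcases Nat.eq_zero_or_pos U.card with h0 | h0
        · simp [h0]
        · have : U.card ≤ U.card * U.card := Nat.le_mul_of_pos_left _ h0
          zify [h0, this]
          ring
      have hstep : U.card - 1 ≤ q * q - q := by omega
      have h2 : U.card * (U.card - 1) ≤ U.card * (q * q - q) :=
        Nat.mul_le_mul_left _ hstep
      have h3 : S.card * (q * q - q) ≤ U.card * (q * q - q) := by omega
      have := Nat.le_of_mul_le_mul_right h3 hqq
      omega
    · -- U.card ≥ q^2 - q + 2; find points outside U
      have hmlt : U.card < q ^ 2 := lt_of_lt_of_le hcon hq2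
      obtain ⟨p, hp⟩ : ∃ p, p ∉ U := by
        by_contra h
        push_neg at h
        rw [Finset.eq_univ_of_forall h, Finset.card_univ, hAP.card_points] at hmlt
        omega
      have hSavoid : ∀ b ∈ S, p ∉ b := fun b hb hpb => hp (hUsub b hb hpb)
      have hqq1 : q * (q + 1) = q * q + q := by ring
      rcases Nat.lt_or_ge U.card (q ^ 2 - 1) with hm2 | hm2
      · -- two points outside
        obtain ⟨p', hp'U, hp'p⟩ : ∃ p', p' ∉ U ∧ p' ≠ p := by
          have hins : (insert p U).card < Fintype.card X := by
            have := Finset.card_insert_le p U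
            rw [hAP.card_points]; omega
          obtain ⟨p', hp'⟩ : ∃ p', p' ∉ insert p U := by
            by_contra h
            push_neg at h
            rw [Finset.eq_univ_of_forall h, Finset.card_univ] at hins
            omega
          rw [Finset.mem_insert] at hp'
          push_neg at hp'
          exact ⟨p', hp'.2, hp'.1⟩
        have hS'avoid : ∀ b ∈ S, p' ∉ b := fun b hb hpb => hp'U (hUsub b hb hpb)
        have hMcard : (B.filter (fun b => p ∈ b ∨ p' ∈ b)).card = 2 * q + 1 := by
          have hI := Finset.card_union_add_card_inter
            (B.filter (fun b => p ∈ b)) (B.filter (fun b => p' ∈ b))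
          rw [← Finset.filter_or, ← Finset.filter_and, AP_filter_point hAP hq p,
            AP_filter_point hAP hq p', AP_filter_pair hAP (Ne.symm hp'p)] at hI
          omega
        have hSM : S ⊆ B \ B.filter (fun b => p ∈ b ∨ p' ∈ b) := by
          intro b hb
          rw [Finset.mem_sdiff, Finset.mem_filter]
          push_neg
          exact ⟨hSB hb, fun _ => ⟨hSavoid b hb, hS'avoid b hb⟩⟩
        have hfin := Finset.card_le_card hSM
        rw [Finset.card_sdiff_of_subset (Finset.filter_subset _ _), hMcard, hAP.card_blocks] at hfin
        omega
      · -- U.card = q^2 - 1 : one point suffices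
        have hSM : S ⊆ B \ B.filter (fun b => p ∈ b) := by
          intro b hb
          rw [Finset.mem_sdiff, Finset.mem_filter]
          exact ⟨hSB hb, fun h => hSavoid b hb h.2⟩
        have hfin := Finset.card_le_card hSM
        rw [Finset.card_sdiff_of_subset (Finset.filter_subset _ _), AP_filter_point hAP hq p,
          hAP.card_blocks] at hfin
        omega
end

section
/- Let (X,B) be an affine plane of order q with q ≥ 2. Then for every 1 ≤ i ≤ (q² − q + 2)/2 and every set of i distinct blocks of B, the union of these blocks contains at least i + (q − 1) points. -/
lemma choose_two_mul_two (n : ℕ) : n.choose 2 * 2 = n * (n - 1) := by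
  rw [Nat.choose_two_right]
  rcases n with _ | m
  · simp
  · rw [Nat.succ_sub_one]
    exact Nat.div_mul_cancel (by
      rw [mul_comm]; exact (Nat.even_mul_succ_self m).two_dvd)

lemma key_arith (i q : ℕ) (hi : 1 ≤ i) (hq : 2 ≤ q)
    (him : i ≤ (q ^ 2 - q + 2) / 2)
    (h : i * (q * (q - 1)) ≤ (i + q - 2) * (i + q - 3)) : False := by
  obtain ⟨a, rfl⟩ := Nat.exists_eq_add_of_le hi
  obtain ⟨b, rfl⟩ := Nat.exists_eq_add_of_le hq
  have him' : (1 + a) * 2 ≤ (2 + b) ^ 2 - (2 + b) + 2 :=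
    (Nat.le_div_iff_mul_le (by norm_num)).mp him
  have hP : (2 + b) ^ 2 = (2 + b) * (1 + b) + (2 + b) := by ring
  have him2 : 2 * a ≤ b * b + 3 * b + 2 := by
    have hPP : (2 + b) * (1 + b) = b * b + 3 * b + 2 := by ring
    rw [hP, hPP] at him'
    omega
  rw [show 1 + a + (2 + b) - 2 = 1 + a + b from by omega,
      show 1 + a + (2 + b) - 3 = a + b from by omega,
      show 2 + b - 1 = 1 + b from by omega] at h
  nlinarith [mul_le_mul_right him2 a, sq_nonneg (a - b), Nat.zero_le (a*b)]

/-- In an affine plane of order `q ≥ 2`, any `i` distinct blocks,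
`1 ≤ i ≤ (q² - q + 2)/2`, cover at least `i + (q - 1)` points. -/
theorem affine_plane_deficiency_hall {X : Type*} [Fintype X] [DecidableEq X]
    (q : ℕ) (hq : 2 ≤ q) (B : Finset (Finset X)) (hAP : IsAffinePlane q B) :
    ∀ S : Finset (Finset X), S ⊆ B → 1 ≤ S.card →
      S.card ≤ (q ^ 2 - q + 2) / 2 →
      S.card + (q - 1) ≤ (S.sup id).card := by
  intro S hSB h1 h2
  by_contra hcon
  push_neg at hcon
  set U := S.sup id with hU
  -- pair-sets of distinct blocks are disjoint, since two points lie in a unique block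
  have hdisj : ∀ b ∈ S, ∀ b' ∈ S, b ≠ b' →
      Disjoint (b.powersetCard 2) (b'.powersetCard 2) := by
    intro b hb b' hb' hne
    rw [Finset.disjoint_left]
    intro t ht ht'
    rw [Finset.mem_powersetCard] at ht ht'
    obtain ⟨p, r, hpr, rfl⟩ := Finset.card_eq_two.mp ht.2
    obtain ⟨c, _, huniq⟩ := hAP.pairs_covered p r hpr
    have e1 := huniq b ⟨hSB hb, ht.1 (by simp), ht.1 (by simp)⟩
    have e2 := huniq b' ⟨hSB hb', ht'.1 (by simp), ht'.1 (by simp)⟩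
    exact hne (e1.trans e2.symm)
  have hsum : S.card * q.choose 2 ≤ U.card.choose 2 := by
    calc S.card * q.choose 2 = ∑ b ∈ S, (b.powersetCard 2).card := by
          rw [Finset.sum_congr rfl
            (fun b hb => by rw [Finset.card_powersetCard, hAP.block_card b (hSB hb)])]
          rw [Finset.sum_const, smul_eq_mul]
      _ = (S.biUnion (fun b => b.powersetCard 2)).card :=
          (Finset.card_biUnion hdisj).symm
      _ ≤ (U.powersetCard 2).card := Finset.card_le_card (by
          intro t ht
          simp only [Finset.mem_biUnion] at ht
          obtain ⟨b, hb, ht⟩ := ht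
          rw [Finset.mem_powersetCard] at ht ⊢
          exact ⟨ht.1.trans (Finset.le_sup (f := id) hb), ht.2⟩)
      _ = U.card.choose 2 := Finset.card_powersetCard 2 U
  have hUle : U.card ≤ S.card + q - 2 := by omega
  have hle : S.card * q.choose 2 ≤ (S.card + q - 2).choose 2 :=
    hsum.trans (Nat.choose_le_choose 2 hUle)
  have h2' : S.card * (q * (q - 1)) ≤ (S.card + q - 2) * (S.card + q - 3) := by
    have := Nat.mul_le_mul_right 2 hle
    rw [mul_assoc, choose_two_mul_two, choose_two_mul_two] at this
    rw [show S.card + q - 2 - 1 = S.card + q - 3 from by omega] at this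
    exact this
  exact key_arith S.card q h1 hq h2 h2'
end

section
/- Let (X,B) be a resolvable affine plane of order q for a prime power q. Then there exists a set of q² − q + 1 distinct blocks of B whose union contains at most q² − 1 points. -/
/-- An affine plane of order `s` is resolvable if its block set can be
partitioned into `s + 1` parallel classes of `s` blocks each, so that every
point lies in exactly one block of each class. -/
def IsResolvableAffinePlane {X : Type*} [Fintype X] [DecidableEq X]
    (s : ℕ) (B : Finset (Finset X)) : Prop :=
  IsAffinePlane s B ∧
  ∃ C : Finset (Finset (Finset X)), C.card = s + 1 ∧
    (∀ c ∈ C, c.card = s ∧ c ⊆ B) ∧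
    (∀ c₁ ∈ C, ∀ c₂ ∈ C, c₁ ≠ c₂ → Disjoint c₁ c₂) ∧
    C.sup id = B ∧
    (∀ c ∈ C, ∀ p : X, ∃! b, b ∈ c ∧ p ∈ b)

/-- In a resolvable affine plane of prime power order `q`, there exist
`q² - q + 1` distinct blocks whose union contains at most `q² - 1` points. -/
theorem affine_plane_hall_violation {X : Type*} [Fintype X] [DecidableEq X]
    (q : ℕ) (hq : IsPrimePow q) (B : Finset (Finset X))
    (hAP : IsResolvableAffinePlane q B) :
    ∃ S : Finset (Finset X), S ⊆ B ∧ S.card = q ^ 2 - q + 1 ∧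
      (S.sup id).card ≤ q ^ 2 - 1 := by
  obtain ⟨hAP', C, hCcard, hCsub, _, hCsup, hCuniq⟩ := hAP
  have hq2 : 2 ≤ q := hq.two_le
  -- X is nonempty
  have hXpos : 0 < Fintype.card X := by
    rw [hAP'.card_points]; positivity
  obtain ⟨p⟩ := Fintype.card_pos_iff.mp hXpos
  -- blocks containing p
  set P := B.filter (fun b => p ∈ b) with hP
  have hPsub : P ⊆ C.biUnion (fun c => c.filter (fun b => p ∈ b)) := by
    intro b hb
    rw [hP, Finset.mem_filter] at hb
    have hbB : b ∈ C.sup id := by rw [hCsup]; exact hb.1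
    rw [Finset.mem_sup] at hbB
    obtain ⟨c, hc, hbc⟩ := hbB
    exact Finset.mem_biUnion.mpr ⟨c, hc, Finset.mem_filter.mpr ⟨hbc, hb.2⟩⟩
  have hfilt : ∀ c ∈ C, (c.filter (fun b => p ∈ b)).card = 1 := by
    intro c hc
    obtain ⟨b, ⟨hbc, hpb⟩, huniq⟩ := hCuniq c hc p
    rw [Finset.card_eq_one]
    refine ⟨b, ?_⟩
    ext b'
    simp only [Finset.mem_filter, Finset.mem_singleton]
    constructor
    · rintro ⟨h1, h2⟩; exact huniq b' ⟨h1, h2⟩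
    · rintro rfl; exact ⟨hbc, hpb⟩
  have hPcard : P.card ≤ q + 1 := by
    calc P.card ≤ (C.biUnion (fun c => c.filter (fun b => p ∈ b))).card :=
        Finset.card_le_card hPsub
      _ ≤ ∑ c ∈ C, (c.filter (fun b => p ∈ b)).card := Finset.card_biUnion_le
      _ = ∑ c ∈ C, 1 := Finset.sum_congr rfl hfilt
      _ = q + 1 := by rw [Finset.sum_const, smul_eq_mul, mul_one, hCcard]
  -- blocks not containing p
  set F := B.filter (fun b => p ∉ b) with hF
  have hsplit : P.card + F.card = B.card := Finset.card_filter_add_card_filter_not _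
  have hFcard : q ^ 2 - q + 1 ≤ F.card := by
    have hB : B.card = q * (q + 1) := hAP'.card_blocks
    have h1 : q * (q + 1) = q * q + q := by ring
    have h2 : q ^ 2 = q * q := sq q
    have h3 : q ≤ q ^ 2 := Nat.le_self_pow two_ne_zero q
    omega
  obtain ⟨S, hSF, hScard⟩ := Finset.exists_subset_card_eq hFcard
  refine ⟨S, hSF.trans (Finset.filter_subset _ _), hScard, ?_⟩
  have hsub : S.sup id ⊆ Finset.univ.erase p := by
    intro x hx
    rw [Finset.mem_sup] at hx
    obtain ⟨b, hb, hxb⟩ := hx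
    have hbF := hSF hb
    rw [hF, Finset.mem_filter] at hbF
    refine Finset.mem_erase.mpr ⟨?_, Finset.mem_univ x⟩
    rintro rfl
    exact hbF.2 hxb
  calc (S.sup id).card ≤ (Finset.univ.erase p).card := Finset.card_le_card hsub
    _ = q ^ 2 - 1 := by
        rw [Finset.card_erase_of_mem (Finset.mem_univ p), Finset.card_univ,
          hAP'.card_points]
end

section
/- Let (P,G,B) be a transversal design TD(3,α) with α ≥ 6. Then there exists a set of 2α − 1 distinct blocks of B whose union contains at most 2α points. -/
set_option maxHeartbeats 1000000 in
/-- In a `TD(3,α)` with `α ≥ 6`, there exist `2α - 1` distinct blocks whose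
union contains at most `2α` points. -/
theorem td3_deficiency_hall_violation {P : Type*} [Fintype P] [DecidableEq P]
    (α : ℕ) (hα : 6 ≤ α) (Gr B : Finset (Finset P))
    (hTD : IsTransversalDesign 3 α Gr B) :
    ∃ S : Finset (Finset P), S ⊆ B ∧ S.card = 2 * α - 1 ∧
      (S.sup id).card ≤ 2 * α := by
  classical
  obtain ⟨g₁, g₂, g₃, h12, h13, h23, hGr⟩ := Finset.card_eq_three.mp hTD.card_groups
  have hg₁ : g₁ ∈ Gr := by rw [hGr]; simp
  have hg₂ : g₂ ∈ Gr := by rw [hGr]; simp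
  have hg₃ : g₃ ∈ Gr := by rw [hGr]; simp
  have hc₁ : g₁.card = α := hTD.group_card _ hg₁
  have hc₂ : g₂.card = α := hTD.group_card _ hg₂
  have hc₃ : g₃.card = α := hTD.group_card _ hg₃
  obtain ⟨A₁, hA₁s, hA₁c⟩ := Finset.exists_subset_card_eq (s := g₁) (n := α - 2) (by omega)
  obtain ⟨A₂, hA₂s, hA₂c⟩ := Finset.exists_subset_card_eq (s := g₂) (n := α - 2) (by omega)
  set T := B.filter (fun b => (b ∩ A₁).Nonempty ∧ (b ∩ A₂).Nonempty) with hTdef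
  have hTB : T ⊆ B := Finset.filter_subset _ _
  -- the unique point of a block in a group
  have hsingle : ∀ b ∈ B, ∀ g ∈ Gr, ∀ p ∈ b ∩ g, ∀ q ∈ b ∩ g, p = q := by
    intro b hb g hg p hp q hq
    exact Finset.card_le_one.mp (le_of_eq (hTD.block_meets_group b hb g hg)) p hp q hq
  -- T has at least (α-2)^2 blocks
  have hTcard : (α - 2) * (α - 2) ≤ T.card := by
    have key := Finset.card_le_card_of_injOn
      (s := A₁ ×ˢ A₂) (t := T)
      (fun pq => if h : ∃ b, b ∈ B ∧ pq.1 ∈ b ∧ pq.2 ∈ b then h.choose else ∅)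
      ?_ ?_
    · simpa [Finset.card_product, hA₁c, hA₂c] using key
    · intro pq hpq
      obtain ⟨hp, hq⟩ := Finset.mem_product.mp hpq
      have hex : ∃ b, b ∈ B ∧ pq.1 ∈ b ∧ pq.2 ∈ b :=
        (hTD.pairs_covered pq.1 pq.2 g₁ hg₁ g₂ hg₂ h12 (hA₁s hp) (hA₂s hq)).exists
      simp only [dif_pos hex]
      obtain ⟨hbB, hpb, hqb⟩ := hex.choose_spec
      exact Finset.mem_filter.mpr ⟨hbB, ⟨pq.1, Finset.mem_inter.mpr ⟨hpb, hp⟩⟩,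
        ⟨pq.2, Finset.mem_inter.mpr ⟨hqb, hq⟩⟩⟩
    · intro pq hpq pq' hpq' heq
      simp only [Finset.coe_product, Set.mem_prod, Finset.mem_coe] at hpq hpq'
      have hex : ∃ b, b ∈ B ∧ pq.1 ∈ b ∧ pq.2 ∈ b :=
        (hTD.pairs_covered pq.1 pq.2 g₁ hg₁ g₂ hg₂ h12 (hA₁s hpq.1) (hA₂s hpq.2)).exists
      have hex' : ∃ b, b ∈ B ∧ pq'.1 ∈ b ∧ pq'.2 ∈ b :=
        (hTD.pairs_covered pq'.1 pq'.2 g₁ hg₁ g₂ hg₂ h12 (hA₁s hpq'.1) (hA₂s hpq'.2)).exists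
      simp only [dif_pos hex, dif_pos hex'] at heq
      obtain ⟨hbB, hpb, hqb⟩ := hex.choose_spec
      obtain ⟨hbB', hpb', hqb'⟩ := hex'.choose_spec
      rw [heq] at hpb hqb
      have e1 : pq.1 = pq'.1 := hsingle _ hbB' g₁ hg₁ _
        (Finset.mem_inter.mpr ⟨hpb, hA₁s hpq.1⟩) _ (Finset.mem_inter.mpr ⟨hpb', hA₁s hpq'.1⟩)
      have e2 : pq.2 = pq'.2 := hsingle _ hbB' g₂ hg₂ _
        (Finset.mem_inter.mpr ⟨hqb, hA₂s hpq.2⟩) _ (Finset.mem_inter.mpr ⟨hqb', hA₂s hpq'.2⟩)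
      exact Prod.ext e1 e2
  -- counting function
  set f : P → ℕ := fun x => (T.filter (fun b => x ∈ b)).card with hfdef
  have hsum : ∑ x ∈ g₃, f x = T.card := by
    have : ∑ x ∈ g₃, f x = ∑ b ∈ T, (g₃.filter (fun x => x ∈ b)).card := by
      simp only [hfdef, Finset.card_filter]
      exact Finset.sum_comm
    rw [this]
    have hone : ∀ b ∈ T, (g₃.filter (fun x => x ∈ b)).card = 1 := by
      intro b hb
      have : g₃.filter (fun x => x ∈ b) = b ∩ g₃ := by
        ext x; simp [Finset.mem_inter, and_comm]
      rw [this]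
      exact hTD.block_meets_group b (hTB hb) g₃ hg₃
    rw [Finset.sum_congr rfl hone]
    simp
  -- greedy: pick the four largest values of f on g₃
  have hne₁ : g₃.Nonempty := Finset.card_pos.mp (by omega)
  obtain ⟨x₁, hx₁, hmax₁⟩ := Finset.exists_max_image g₃ f hne₁
  have hne₂ : (g₃.erase x₁).Nonempty := Finset.card_pos.mp (by
    rw [Finset.card_erase_of_mem hx₁]; omega)
  obtain ⟨x₂, hx₂, hmax₂⟩ := Finset.exists_max_image _ f hne₂
  have hne₃ : ((g₃.erase x₁).erase x₂).Nonempty := Finset.card_pos.mp (by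
    rw [Finset.card_erase_of_mem hx₂, Finset.card_erase_of_mem hx₁]; omega)
  obtain ⟨x₃, hx₃, hmax₃⟩ := Finset.exists_max_image _ f hne₃
  have hne₄ : (((g₃.erase x₁).erase x₂).erase x₃).Nonempty := Finset.card_pos.mp (by
    rw [Finset.card_erase_of_mem hx₃, Finset.card_erase_of_mem hx₂,
      Finset.card_erase_of_mem hx₁]; omega)
  obtain ⟨x₄, hx₄, hmax₄⟩ := Finset.exists_max_image _ f hne₄
  set R := (((g₃.erase x₁).erase x₂).erase x₃).erase x₄ with hRdef
  have hRcard : R.card = α - 4 := by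
    rw [hRdef, Finset.card_erase_of_mem hx₄, Finset.card_erase_of_mem hx₃,
      Finset.card_erase_of_mem hx₂, Finset.card_erase_of_mem hx₁, hc₃]
    omega
  have hsumdecomp : f x₁ + (f x₂ + (f x₃ + (f x₄ + ∑ x ∈ R, f x))) = T.card := by
    rw [← hsum, ← Finset.add_sum_erase _ f hx₁, ← Finset.add_sum_erase _ f hx₂,
      ← Finset.add_sum_erase _ f hx₃, ← Finset.add_sum_erase _ f hx₄]
  have hRle : ∑ x ∈ R, f x ≤ (α - 4) * f x₄ := by
    calc ∑ x ∈ R, f x ≤ R.card • f x₄ :=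
          Finset.sum_le_card_nsmul _ _ _ (fun x hx => hmax₄ x (Finset.erase_subset _ _ hx))
      _ = (α - 4) * f x₄ := by rw [hRcard, smul_eq_mul]
  -- f x₄ is at most each of the others
  have h41 : f x₄ ≤ f x₁ := hmax₁ x₄ (by
    exact Finset.erase_subset _ _ (Finset.erase_subset _ _ (Finset.erase_subset _ _ hx₄)))
  have h42 : f x₄ ≤ f x₂ := hmax₂ x₄ (Finset.erase_subset _ _ (Finset.erase_subset _ _ hx₄))
  have h43 : f x₄ ≤ f x₃ := hmax₃ x₄ (Finset.erase_subset _ _ hx₄)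
  -- key inequality : the top four values sum to at least 2α - 1
  have hbig : 2 * α - 1 ≤ f x₁ + f x₂ + f x₃ + f x₄ := by
    obtain ⟨γ, rfl⟩ : ∃ γ, α = γ + 6 := ⟨α - 6, by omega⟩
    have e1 : γ + 6 - 2 = γ + 4 := by omega
    have e2 : γ + 6 - 4 = γ + 2 := by omega
    rw [e1] at hTcard
    rw [e2] at hRle
    have hN : (γ + 4) * (γ + 4) ≤ f x₁ + f x₂ + f x₃ + f x₄ + (γ + 2) * f x₄ := by omega
    have hm : 4 * f x₄ ≤ f x₁ + f x₂ + f x₃ + f x₄ := by omega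
    have hkey : 2 * γ + 11 ≤ f x₁ + f x₂ + f x₃ + f x₄ := by
      nlinarith [hN, hm, h41, h42, h43]
    omega
  -- points of g₃ are distinct
  have hx₂g : x₂ ∈ g₃ := Finset.erase_subset _ _ hx₂
  have hx₃g : x₃ ∈ g₃ := Finset.erase_subset _ _ (Finset.erase_subset _ _ hx₃)
  have hx₄g : x₄ ∈ g₃ :=
    Finset.erase_subset _ _ (Finset.erase_subset _ _ (Finset.erase_subset _ _ hx₄))
  -- the blocks through x₁,…,x₄
  set S₀ := T.filter (fun b => x₁ ∈ b ∨ x₂ ∈ b ∨ x₃ ∈ b ∨ x₄ ∈ b) with hS₀def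
  -- S₀ is the disjoint union of the T_{xᵢ}
  have hdisj : ∀ y z : P, y ∈ g₃ → z ∈ g₃ → y ≠ z →
      Disjoint (T.filter (fun b => y ∈ b)) (T.filter (fun b => z ∈ b)) := by
    intro y z hy hz hyz
    rw [Finset.disjoint_left]
    intro b hb hb'
    obtain ⟨hbT, hyb⟩ := Finset.mem_filter.mp hb
    obtain ⟨_, hzb⟩ := Finset.mem_filter.mp hb'
    exact hyz (hsingle b (hTB hbT) g₃ hg₃ y (Finset.mem_inter.mpr ⟨hyb, hy⟩)
      z (Finset.mem_inter.mpr ⟨hzb, hz⟩))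
  have hne12 : x₁ ≠ x₂ := fun h => (Finset.mem_erase.mp hx₂).1 h.symm
  have hne13 : x₁ ≠ x₃ := fun h =>
    (Finset.mem_erase.mp (Finset.mem_of_mem_erase hx₃)).1 h.symm
  have hne14 : x₁ ≠ x₄ := fun h =>
    (Finset.mem_erase.mp (Finset.mem_of_mem_erase (Finset.mem_of_mem_erase hx₄))).1 h.symm
  have hne23 : x₂ ≠ x₃ := fun h => (Finset.mem_erase.mp hx₃).1 h.symm
  have hne24 : x₂ ≠ x₄ := fun h =>
    (Finset.mem_erase.mp (Finset.mem_of_mem_erase hx₄)).1 h.symm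
  have hne34 : x₃ ≠ x₄ := fun h => (Finset.mem_erase.mp hx₄).1 h.symm
  have hS₀eq : S₀ = T.filter (fun b => x₁ ∈ b) ∪ T.filter (fun b => x₂ ∈ b) ∪
      T.filter (fun b => x₃ ∈ b) ∪ T.filter (fun b => x₄ ∈ b) := by
    ext b
    simp only [hS₀def, Finset.mem_filter, Finset.mem_union]
    tauto
  have hd12 : Disjoint (T.filter (fun b => x₁ ∈ b)) (T.filter (fun b => x₂ ∈ b)) :=
    hdisj _ _ hx₁ hx₂g hne12
  have hd123 : Disjoint (T.filter (fun b => x₁ ∈ b) ∪ T.filter (fun b => x₂ ∈ b))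
      (T.filter (fun b => x₃ ∈ b)) :=
    Finset.disjoint_union_left.mpr ⟨hdisj _ _ hx₁ hx₃g hne13, hdisj _ _ hx₂g hx₃g hne23⟩
  have hd1234 : Disjoint (T.filter (fun b => x₁ ∈ b) ∪ T.filter (fun b => x₂ ∈ b) ∪
      T.filter (fun b => x₃ ∈ b)) (T.filter (fun b => x₄ ∈ b)) := by
    rw [Finset.disjoint_union_left, Finset.disjoint_union_left]
    exact ⟨⟨hdisj _ _ hx₁ hx₄g hne14, hdisj _ _ hx₂g hx₄g hne24⟩,
      hdisj _ _ hx₃g hx₄g hne34⟩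
  have hS₀card : f x₁ + f x₂ + f x₃ + f x₄ ≤ S₀.card := by
    rw [hS₀eq, Finset.card_union_of_disjoint hd1234, Finset.card_union_of_disjoint hd123,
      Finset.card_union_of_disjoint hd12]
  -- choose exactly 2α-1 blocks from S₀
  obtain ⟨S, hSsub, hScard⟩ := Finset.exists_subset_card_eq (s := S₀) (n := 2 * α - 1) (le_trans hbig hS₀card)
  refine ⟨S, fun b hb => hTB (Finset.mem_filter.mp (hSsub hb)).1, hScard, ?_⟩
  -- every block of S is contained in A₁ ∪ A₂ ∪ {x₁,x₂,x₃,x₄}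
  have hcover : S.sup id ≤ A₁ ∪ A₂ ∪ {x₁, x₂, x₃, x₄} := by
    apply Finset.sup_le
    intro b hb
    obtain ⟨hbT, hor⟩ := Finset.mem_filter.mp (hSsub hb)
    obtain ⟨hbB, hA₁ne, hA₂ne⟩ := Finset.mem_filter.mp hbT
    intro p hp
    obtain ⟨g, hg, hpg⟩ := hTD.groups_cover p
    rw [hGr] at hg
    simp only [Finset.mem_insert, Finset.mem_singleton] at hg
    simp only [Finset.mem_union, Finset.mem_insert, Finset.mem_singleton]
    rcases hg with rfl | rfl | rfl
    · obtain ⟨q, hq⟩ := hA₁ne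
      obtain ⟨hqb, hqA⟩ := Finset.mem_inter.mp hq
      have : p = q := hsingle b hbB g hg₁ p (Finset.mem_inter.mpr ⟨hp, hpg⟩)
        q (Finset.mem_inter.mpr ⟨hqb, hA₁s hqA⟩)
      exact Or.inl (Or.inl (this ▸ hqA))
    · obtain ⟨q, hq⟩ := hA₂ne
      obtain ⟨hqb, hqA⟩ := Finset.mem_inter.mp hq
      have : p = q := hsingle b hbB g hg₂ p (Finset.mem_inter.mpr ⟨hp, hpg⟩)
        q (Finset.mem_inter.mpr ⟨hqb, hA₂s hqA⟩)
      exact Or.inl (Or.inr (this ▸ hqA))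
    · rcases hor with h | h | h | h
      · exact Or.inr (Or.inl (hsingle b hbB g hg₃ p (Finset.mem_inter.mpr ⟨hp, hpg⟩)
          x₁ (Finset.mem_inter.mpr ⟨h, hx₁⟩)))
      · exact Or.inr (Or.inr (Or.inl (hsingle b hbB g hg₃ p (Finset.mem_inter.mpr ⟨hp, hpg⟩)
          x₂ (Finset.mem_inter.mpr ⟨h, hx₂g⟩))))
      · exact Or.inr (Or.inr (Or.inr (Or.inl (hsingle b hbB g hg₃ p
          (Finset.mem_inter.mpr ⟨hp, hpg⟩) x₃ (Finset.mem_inter.mpr ⟨h, hx₃g⟩)))))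
      · exact Or.inr (Or.inr (Or.inr (Or.inr (hsingle b hbB g hg₃ p
          (Finset.mem_inter.mpr ⟨hp, hpg⟩) x₄ (Finset.mem_inter.mpr ⟨h, hx₄g⟩)))))
  have hY4 : ({x₁, x₂, x₃, x₄} : Finset P).card ≤ 4 := by
    have h1 := Finset.card_insert_le x₁ ({x₂, x₃, x₄} : Finset P)
    have h2 := Finset.card_insert_le x₂ ({x₃, x₄} : Finset P)
    have h3 := Finset.card_insert_le x₃ ({x₄} : Finset P)
    simp only [Finset.card_singleton] at *
    omega
  calc (S.sup id).card ≤ (A₁ ∪ A₂ ∪ {x₁, x₂, x₃, x₄}).card := Finset.card_le_card hcover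
    _ ≤ (A₁ ∪ A₂).card + ({x₁, x₂, x₃, x₄} : Finset P).card := Finset.card_union_le _ _
    _ ≤ (A₁.card + A₂.card) + 4 := add_le_add (Finset.card_union_le _ _) hY4
    _ ≤ 2 * α := by rw [hA₁c, hA₂c]; omega
end

section
/- Let (P,G,B) be a transversal design TD(3,5). Then for every 1 ≤ i ≤ 9 and every set of i distinct blocks of B, the union of these blocks contains at least i + 2 points; moreover, there exists a set of 10 distinct blocks of B whose union contains at most 11 points. Likewise, if (P,G,B) is a transversal design TD(3,4), then for every 1 ≤ i ≤ 8 and every set of i distinct blocks of B, the union of these blocks contains at least i + 2 points, and there exists a set of 9 distinct blocks of B whose union contains at most 10 points. -/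
namespace TDaux

variable {P : Type*} [Fintype P] [DecidableEq P] {ℓ h : ℕ}
  {Gr B : Finset (Finset P)}

/-- the intersection of a block with a group is the singleton of any of its members -/
lemma inter_eq_singleton (hTD : IsTransversalDesign ℓ h Gr B)
    {b g : Finset P} {p : P} (hb : b ∈ B) (hg : g ∈ Gr) (hpb : p ∈ b) (hpg : p ∈ g) :
    b ∩ g = {p} := by
  obtain ⟨x, hx⟩ := Finset.card_eq_one.mp (hTD.block_meets_group b hb g hg)
  have : p ∈ b ∩ g := Finset.mem_inter.mpr ⟨hpb, hpg⟩
  rw [hx] at this ⊢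
  simp_all

/-- a block is determined by two of its points in distinct groups -/
lemma block_unique (hTD : IsTransversalDesign ℓ h Gr B)
    {b b' g g' : Finset P} {p q : P} (hb : b ∈ B) (hb' : b' ∈ B)
    (hg : g ∈ Gr) (hg' : g' ∈ Gr) (hgg' : g ≠ g')
    (hpg : p ∈ g) (hqg : q ∈ g')
    (hpb : p ∈ b) (hqb : q ∈ b) (hpb' : p ∈ b') (hqb' : q ∈ b') : b = b' := by
  obtain ⟨u, -, hu⟩ := hTD.pairs_covered p q g hg g' hg' hgg' hpg hqg
  rw [hu b ⟨hb, hpb, hqb⟩, hu b' ⟨hb', hpb', hqb'⟩]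

/-- workhorse counting lemma -/
lemma count_pairs (hTD : IsTransversalDesign ℓ h Gr B)
    {g g' : Finset P} (hg : g ∈ Gr) (hg' : g' ∈ Gr) (hgg' : g ≠ g')
    {A C : Finset P} (hA : A ⊆ g) (hC : C ⊆ g') :
    (B.filter (fun b => b ∩ g ⊆ A ∧ b ∩ g' ⊆ C)).card = A.card * C.card := by
  rw [← Finset.card_product]
  symm
  apply Finset.card_bij
    (i := fun pq hpq =>
      (hTD.pairs_covered pq.1 pq.2 g hg g' hg' hgg'
        (hA (Finset.mem_product.mp hpq).1) (hC (Finset.mem_product.mp hpq).2)).exists.choose)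
  · intro pq hpq
    set E := (hTD.pairs_covered pq.1 pq.2 g hg g' hg' hgg'
        (hA (Finset.mem_product.mp hpq).1) (hC (Finset.mem_product.mp hpq).2)).exists
    obtain ⟨hbB, h1, h2⟩ := E.choose_spec
    refine Finset.mem_filter.mpr ⟨hbB, ?_, ?_⟩
    · rw [inter_eq_singleton hTD hbB hg h1 (hA (Finset.mem_product.mp hpq).1)]
      simpa using (Finset.mem_product.mp hpq).1
    · rw [inter_eq_singleton hTD hbB hg' h2 (hC (Finset.mem_product.mp hpq).2)]
      simpa using (Finset.mem_product.mp hpq).2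
  · intro pq1 h1 pq2 h2 heq
    set E1 := (hTD.pairs_covered pq1.1 pq1.2 g hg g' hg' hgg'
        (hA (Finset.mem_product.mp h1).1) (hC (Finset.mem_product.mp h1).2)).exists
    set E2 := (hTD.pairs_covered pq2.1 pq2.2 g hg g' hg' hgg'
        (hA (Finset.mem_product.mp h2).1) (hC (Finset.mem_product.mp h2).2)).exists
    obtain ⟨hbB1, h11, h12⟩ := E1.choose_spec
    obtain ⟨hbB2, h21, h22⟩ := E2.choose_spec
    rw [heq] at h11 h12
    have e1 : E2.choose ∩ g = {pq1.1} :=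
      inter_eq_singleton hTD hbB2 hg h11 (hA (Finset.mem_product.mp h1).1)
    have e2 : E2.choose ∩ g = {pq2.1} :=
      inter_eq_singleton hTD hbB2 hg h21 (hA (Finset.mem_product.mp h2).1)
    have e3 : E2.choose ∩ g' = {pq1.2} :=
      inter_eq_singleton hTD hbB2 hg' h12 (hC (Finset.mem_product.mp h1).2)
    have e4 : E2.choose ∩ g' = {pq2.2} :=
      inter_eq_singleton hTD hbB2 hg' h22 (hC (Finset.mem_product.mp h2).2)
    have := e1.symm.trans e2
    have := e3.symm.trans e4
    simp_all [Prod.ext_iff]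
  · intro b hb
    obtain ⟨hbB, hbA, hbC⟩ := Finset.mem_filter.mp hb
    obtain ⟨x, hx⟩ := Finset.card_eq_one.mp (hTD.block_meets_group b hbB g hg)
    obtain ⟨y, hy⟩ := Finset.card_eq_one.mp (hTD.block_meets_group b hbB g' hg')
    have hxA : x ∈ A := hbA (hx ▸ Finset.mem_singleton_self x)
    have hyC : y ∈ C := hbC (hy ▸ Finset.mem_singleton_self y)
    have hxb : x ∈ b ∧ x ∈ g := Finset.mem_inter.mp (hx ▸ Finset.mem_singleton_self x)
    have hyb : y ∈ b ∧ y ∈ g' := Finset.mem_inter.mp (hy ▸ Finset.mem_singleton_self y)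
    refine ⟨(x, y), Finset.mem_product.mpr ⟨hxA, hyC⟩, ?_⟩
    set E := (hTD.pairs_covered x y g hg g' hg' hgg' (hA hxA) (hC hyC)).exists
    obtain ⟨hbB', h1', h2'⟩ := E.choose_spec
    exact block_unique hTD hbB' hbB hg hg' hgg' (hA hxA) (hC hyC) h1' h2' hxb.1 hyb.1


/-- negation of membership condition -/
lemma not_sub_iff (hTD : IsTransversalDesign ℓ h Gr B)
    {b g A : Finset P} (hb : b ∈ B) (hg : g ∈ Gr) (hA : A ⊆ g) :
    ¬(b ∩ g ⊆ A) ↔ b ∩ g ⊆ g \ A := by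
  obtain ⟨x, hx⟩ := Finset.card_eq_one.mp (hTD.block_meets_group b hb g hg)
  have hxg : x ∈ g := (Finset.mem_inter.mp (hx ▸ Finset.mem_singleton_self x)).2
  rw [hx]
  simp [Finset.singleton_subset_iff, hxg]

/-- the key inclusion–exclusion inequality -/
lemma key_ineq (hTD : IsTransversalDesign ℓ h Gr B)
    {g₁ g₂ g₃ : Finset P} (hg1 : g₁ ∈ Gr) (hg2 : g₂ ∈ Gr) (hg3 : g₃ ∈ Gr)
    (h12 : g₁ ≠ g₂) (h13 : g₁ ≠ g₃) (h23 : g₂ ≠ g₃)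
    {A A' C : Finset P} (hA : A ⊆ g₁) (hA' : A' ⊆ g₂) (hC : C ⊆ g₃) :
    (B.filter (fun b => b ∩ g₁ ⊆ A ∧ b ∩ g₂ ⊆ A' ∧ b ∩ g₃ ⊆ C)).card + h * C.card
      ≤ A.card * C.card + A'.card * C.card + (h - A.card) * (h - A'.card) := by
  classical
  -- cardinalities via count_pairs
  have hg1c : g₁.card = h := hTD.group_card g₁ hg1
  have hg2c : g₂.card = h := hTD.group_card g₂ hg2
  -- hC-count: blocks with third coordinate in C
  have hTcard : (B.filter (fun b => b ∩ g₃ ⊆ C)).card = h * C.card := by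
    rw [← hg1c, ← count_pairs hTD hg1 hg3 h13 (le_refl g₁) hC]
    congr 1
    apply Finset.filter_congr
    intro b hb
    simp [Finset.inter_subset_right]
  have hACcard : (B.filter (fun b => b ∩ g₁ ⊆ A ∧ b ∩ g₃ ⊆ C)).card = A.card * C.card :=
    count_pairs hTD hg1 hg3 h13 hA hC
  have hBCcard : (B.filter (fun b => b ∩ g₂ ⊆ A' ∧ b ∩ g₃ ⊆ C)).card = A'.card * C.card :=
    count_pairs hTD hg2 hg3 h23 hA' hC
  have hcompl : (B.filter (fun b => ¬(b ∩ g₁ ⊆ A) ∧ ¬(b ∩ g₂ ⊆ A'))).card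
      = (h - A.card) * (h - A'.card) := by
    have := count_pairs hTD hg1 hg2 h12 (Finset.sdiff_subset (s := g₁) (t := A))
      (Finset.sdiff_subset (s := g₂) (t := A'))
    rw [Finset.card_sdiff_of_subset hA, Finset.card_sdiff_of_subset hA', hg1c, hg2c] at this
    rw [← this]
    congr 1
    apply Finset.filter_congr
    intro b hb
    simp only [not_sub_iff hTD hb hg1 hA, not_sub_iff hTD hb hg2 hA']
  -- splitting
  have split1 : (B.filter (fun b => b ∩ g₃ ⊆ C)).card
      = (B.filter (fun b => (b ∩ g₁ ⊆ A) ∧ b ∩ g₃ ⊆ C)).card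
        + (B.filter (fun b => ¬(b ∩ g₁ ⊆ A) ∧ b ∩ g₃ ⊆ C)).card := by
    rw [← Finset.card_filter_add_card_filter_not
      (s := B.filter (fun b => b ∩ g₃ ⊆ C)) (p := fun b => b ∩ g₁ ⊆ A)]
    rw [Finset.filter_filter, Finset.filter_filter]
    congr 1 <;> · congr 1; ext b; simp only [Finset.mem_filter]; tauto
  have split2 : (B.filter (fun b => ¬(b ∩ g₁ ⊆ A) ∧ b ∩ g₃ ⊆ C)).card
      = (B.filter (fun b => (b ∩ g₂ ⊆ A') ∧ ¬(b ∩ g₁ ⊆ A) ∧ b ∩ g₃ ⊆ C)).card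
        + (B.filter (fun b => ¬(b ∩ g₂ ⊆ A') ∧ ¬(b ∩ g₁ ⊆ A) ∧ b ∩ g₃ ⊆ C)).card := by
    rw [← Finset.card_filter_add_card_filter_not
      (s := B.filter (fun b => ¬(b ∩ g₁ ⊆ A) ∧ b ∩ g₃ ⊆ C)) (p := fun b => b ∩ g₂ ⊆ A')]
    rw [Finset.filter_filter, Finset.filter_filter]
    congr 1 <;> · congr 1; ext b; simp only [Finset.mem_filter]; tauto
  have split3 : (B.filter (fun b => b ∩ g₂ ⊆ A' ∧ b ∩ g₃ ⊆ C)).card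
      = (B.filter (fun b => (b ∩ g₁ ⊆ A) ∧ b ∩ g₂ ⊆ A' ∧ b ∩ g₃ ⊆ C)).card
        + (B.filter (fun b => (b ∩ g₂ ⊆ A') ∧ ¬(b ∩ g₁ ⊆ A) ∧ b ∩ g₃ ⊆ C)).card := by
    rw [← Finset.card_filter_add_card_filter_not
      (s := B.filter (fun b => b ∩ g₂ ⊆ A' ∧ b ∩ g₃ ⊆ C)) (p := fun b => b ∩ g₁ ⊆ A)]
    rw [Finset.filter_filter, Finset.filter_filter]
    congr 1 <;> · congr 1; ext b; simp only [Finset.mem_filter]; tauto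
  have hle : (B.filter (fun b => ¬(b ∩ g₂ ⊆ A') ∧ ¬(b ∩ g₁ ⊆ A) ∧ b ∩ g₃ ⊆ C)).card
      ≤ (B.filter (fun b => ¬(b ∩ g₁ ⊆ A) ∧ ¬(b ∩ g₂ ⊆ A'))).card := by
    apply Finset.card_le_card
    intro b hb
    simp only [Finset.mem_filter] at hb ⊢
    tauto
  omega



lemma groups_three (hTD : IsTransversalDesign 3 h Gr B) :
    ∃ g₁ g₂ g₃ : Finset P, g₁ ∈ Gr ∧ g₂ ∈ Gr ∧ g₃ ∈ Gr ∧
      g₁ ≠ g₂ ∧ g₁ ≠ g₃ ∧ g₂ ≠ g₃ ∧ Gr = {g₁, g₂, g₃} := by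
  obtain ⟨g₁, g₂, g₃, h12, h13, h23, hGr⟩ := Finset.card_eq_three.mp hTD.card_groups
  exact ⟨g₁, g₂, g₃, by simp [hGr], by simp [hGr], by simp [hGr], h12, h13, h23, hGr⟩

lemma lower_bound (hTD : IsTransversalDesign 3 h Gr B) (imax : ℕ)
    (arith : ∀ i a b c : ℕ, 1 ≤ a → a ≤ h → 1 ≤ b → b ≤ h → 1 ≤ c → c ≤ h →
      i ≤ a * b → i ≤ b * c → i ≤ a * c →
      i + h * c ≤ a * c + b * c + (h - a) * (h - b) →
      1 ≤ i → i ≤ imax → i + 2 ≤ a + b + c) :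
    ∀ S : Finset (Finset P), S ⊆ B → 1 ≤ S.card → S.card ≤ imax →
      S.card + 2 ≤ (S.sup id).card := by
  classical
  obtain ⟨g₁, g₂, g₃, hg1, hg2, hg3, h12, h13, h23, hGr⟩ := groups_three hTD
  intro S hSB hS1 hSi
  set U := S.sup id with hU
  set A := g₁ ∩ U with hA
  set A' := g₂ ∩ U with hA'
  set C := g₃ ∩ U with hC
  have hbU : ∀ b ∈ S, b ⊆ U := fun b hb => Finset.le_sup (f := id) hb
  -- U = A ∪ A' ∪ C
  have hUcov : U = A ∪ A' ∪ C := by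
    ext x
    simp only [Finset.mem_union, hA, hA', hC, Finset.mem_inter]
    constructor
    · intro hx
      obtain ⟨g, hgGr, hxg⟩ := hTD.groups_cover x
      rw [hGr] at hgGr
      simp only [Finset.mem_insert, Finset.mem_singleton] at hgGr
      rcases hgGr with rfl | rfl | rfl <;> tauto
    · tauto
  have hd12 : Disjoint A A' :=
    (hTD.groups_disjoint g₁ hg1 g₂ hg2 h12).mono Finset.inter_subset_left
      Finset.inter_subset_left
  have hd13 : Disjoint A C :=
    (hTD.groups_disjoint g₁ hg1 g₃ hg3 h13).mono Finset.inter_subset_left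
      Finset.inter_subset_left
  have hd23 : Disjoint A' C :=
    (hTD.groups_disjoint g₂ hg2 g₃ hg3 h23).mono Finset.inter_subset_left
      Finset.inter_subset_left
  have hUcard : U.card = A.card + A'.card + C.card := by
    rw [hUcov, Finset.card_union_of_disjoint, Finset.card_union_of_disjoint hd12]
    exact Finset.disjoint_union_left.mpr ⟨hd13, hd23⟩
  -- blocks of S have their group-intersections inside A, A', C
  have hmem : ∀ b ∈ S, b ∩ g₁ ⊆ A ∧ b ∩ g₂ ⊆ A' ∧ b ∩ g₃ ⊆ C := by
    intro b hb
    refine ⟨?_, ?_, ?_⟩ <;>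
      · intro x hx
        simp only [Finset.mem_inter] at hx
        simp only [hA, hA', hC, Finset.mem_inter]
        exact ⟨hx.2, hbU b hb hx.1⟩
  -- bounds
  have hab : S.card ≤ A.card * A'.card := by
    rw [← count_pairs hTD hg1 hg2 h12 (Finset.inter_subset_left (s₁ := g₁))
      (Finset.inter_subset_left (s₁ := g₂))]
    apply Finset.card_le_card
    intro b hb
    exact Finset.mem_filter.mpr ⟨hSB hb, (hmem b hb).1, (hmem b hb).2.1⟩
  have hbc : S.card ≤ A'.card * C.card := by
    rw [← count_pairs hTD hg2 hg3 h23 (Finset.inter_subset_left (s₁ := g₂))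
      (Finset.inter_subset_left (s₁ := g₃))]
    apply Finset.card_le_card
    intro b hb
    exact Finset.mem_filter.mpr ⟨hSB hb, (hmem b hb).2.1, (hmem b hb).2.2⟩
  have hac : S.card ≤ A.card * C.card := by
    rw [← count_pairs hTD hg1 hg3 h13 (Finset.inter_subset_left (s₁ := g₁))
      (Finset.inter_subset_left (s₁ := g₃))]
    apply Finset.card_le_card
    intro b hb
    exact Finset.mem_filter.mpr ⟨hSB hb, (hmem b hb).1, (hmem b hb).2.2⟩
  have hkey : S.card + h * C.card
      ≤ A.card * C.card + A'.card * C.card + (h - A.card) * (h - A'.card) := by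
    have := key_ineq hTD hg1 hg2 hg3 h12 h13 h23
      (Finset.inter_subset_left (s₁ := g₁) (s₂ := U))
      (Finset.inter_subset_left (s₁ := g₂) (s₂ := U))
      (Finset.inter_subset_left (s₁ := g₃) (s₂ := U))
    refine le_trans (Nat.add_le_add_right ?_ _) this
    apply Finset.card_le_card
    intro b hb
    exact Finset.mem_filter.mpr ⟨hSB hb, hmem b hb⟩
  -- nonemptiness and upper bounds
  obtain ⟨b₀, hb₀⟩ := Finset.card_pos.mp hS1
  have hnon : ∀ g ∈ Gr, ∀ X, (g ∩ U ⊆ X) → (b₀ ∩ g ⊆ g ∩ U) → True := fun _ _ _ _ _ => trivial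
  have hne : ∀ (g : Finset P), g ∈ Gr → 1 ≤ (g ∩ U).card := by
    intro g hg
    have h1 : (b₀ ∩ g).card = 1 := hTD.block_meets_group b₀ (hSB hb₀) g hg
    obtain ⟨x, hx⟩ := Finset.card_eq_one.mp h1
    have hxm : x ∈ b₀ ∩ g := hx ▸ Finset.mem_singleton_self x
    simp only [Finset.mem_inter] at hxm
    exact Finset.card_pos.mpr ⟨x, Finset.mem_inter.mpr ⟨hxm.2, hbU b₀ hb₀ hxm.1⟩⟩
  have hub : ∀ (g : Finset P), g ∈ Gr → (g ∩ U).card ≤ h := by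
    intro g hg
    calc (g ∩ U).card ≤ g.card := Finset.card_le_card Finset.inter_subset_left
    _ = h := hTD.group_card g hg
  rw [hUcard]
  exact arith S.card A.card A'.card C.card (hne g₁ hg1) (hub g₁ hg1) (hne g₂ hg2)
    (hub g₂ hg2) (hne g₃ hg3) (hub g₃ hg3) hab hbc hac hkey hS1 hSi

lemma arith5 : ∀ i a b c : ℕ, 1 ≤ a → a ≤ 5 → 1 ≤ b → b ≤ 5 → 1 ≤ c → c ≤ 5 →
    i ≤ a * b → i ≤ b * c → i ≤ a * c →
    i + 5 * c ≤ a * c + b * c + (5 - a) * (5 - b) →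
    1 ≤ i → i ≤ 9 → i + 2 ≤ a + b + c := by
  intro i a b c ha1 ha5 hb1 hb5 hc1 hc5 h1 h2 h3 h4 hi1 hi9
  interval_cases a <;> interval_cases b <;> interval_cases c <;> omega

lemma arith4 : ∀ i a b c : ℕ, 1 ≤ a → a ≤ 4 → 1 ≤ b → b ≤ 4 → 1 ≤ c → c ≤ 4 →
    i ≤ a * b → i ≤ b * c → i ≤ a * c →
    i + 4 * c ≤ a * c + b * c + (4 - a) * (4 - b) →
    1 ≤ i → i ≤ 8 → i + 2 ≤ a + b + c := by
  intro i a b c ha1 ha5 hb1 hb5 hc1 hc5 h1 h2 h3 h4 hi1 hi9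
  interval_cases a <;> interval_cases b <;> interval_cases c <;> omega


/-- number of blocks through a point -/
lemma card_through (hTD : IsTransversalDesign ℓ h Gr B)
    {g g' : Finset P} {p : P} (hg : g ∈ Gr) (hg' : g' ∈ Gr) (hgg' : g ≠ g')
    (hp : p ∈ g) : (B.filter (fun b => p ∈ b)).card = h := by
  have := count_pairs hTD hg hg' hgg' (Finset.singleton_subset_iff.mpr hp)
    (le_refl g')
  rw [Finset.card_singleton, one_mul, hTD.group_card g' hg'] at this
  rw [← this]
  congr 1
  apply Finset.filter_congr
  intro b hb
  simp only [Finset.inter_subset_right, and_true]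
  constructor
  · intro hpb
    rw [inter_eq_singleton hTD hb hg hpb hp]
  · intro hsub
    obtain ⟨x, hx⟩ := Finset.card_eq_one.mp (hTD.block_meets_group b hb g hg)
    have hxm := hx ▸ Finset.mem_singleton_self x
    have := hsub (hx ▸ Finset.mem_singleton_self x)
    simp only [Finset.mem_singleton] at this
    exact this ▸ (Finset.mem_inter.mp hxm).1

/-- total number of blocks -/
lemma card_blocks (hTD : IsTransversalDesign 3 h Gr B) : B.card = h * h := by
  obtain ⟨g₁, g₂, g₃, hg1, hg2, hg3, h12, h13, h23, hGr⟩ := groups_three hTD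
  have := count_pairs hTD hg1 hg2 h12 (le_refl g₁) (le_refl g₂)
  rw [hTD.group_card g₁ hg1, hTD.group_card g₂ hg2] at this
  rw [← this]
  congr 1
  rw [Finset.filter_true_of_mem]
  intro b hb
  exact ⟨Finset.inter_subset_right, Finset.inter_subset_right⟩

/-- union of blocks avoiding a point set F is small -/
lemma sup_bound (hTD : IsTransversalDesign ℓ h Gr B)
    {S : Finset (Finset P)} {F : Finset P}
    (havoid : ∀ b ∈ S, ∀ x ∈ F, x ∉ b) :
    (S.sup id).card ≤ Fintype.card P - F.card := by
  have hsub : S.sup id ≤ Finset.univ \ F := by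
    apply Finset.sup_le
    intro b hb
    intro x hx
    exact Finset.mem_sdiff.mpr ⟨Finset.mem_univ x, fun hxF => havoid b hb x hxF hx⟩
  calc (S.sup id).card ≤ (Finset.univ \ F).card := Finset.card_le_card hsub
  _ = Fintype.card P - F.card := by
    rw [Finset.card_sdiff_of_subset (Finset.subset_univ F), Finset.card_univ]

lemma exists4 (hTD : IsTransversalDesign 3 4 Gr B) :
    ∃ S : Finset (Finset P), S ⊆ B ∧ S.card = 9 ∧ (S.sup id).card ≤ 10 := by
  classical
  obtain ⟨g₁, g₂, g₃, hg1, hg2, hg3, h12, h13, h23, hGr⟩ := groups_three hTD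
  obtain ⟨p, hp⟩ := Finset.card_pos.mp
    (by rw [hTD.group_card g₁ hg1]; norm_num : 0 < g₁.card)
  obtain ⟨q, hq⟩ := Finset.card_pos.mp
    (by rw [hTD.group_card g₂ hg2]; norm_num : 0 < g₂.card)
  set Dp := B.filter (fun b => p ∈ b) with hDp
  set Dq := B.filter (fun b => q ∈ b) with hDq
  have hDpc : Dp.card = 4 := card_through hTD hg1 hg2 h12 hp
  have hDqc : Dq.card = 4 := card_through hTD hg2 hg1 (Ne.symm h12) hq
  obtain ⟨b₀, ⟨hb₀B, hb₀p, hb₀q⟩, -⟩ := hTD.pairs_covered p q g₁ hg1 g₂ hg2 h12 hp hq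
  have hb₀ : b₀ ∈ Dp ∩ Dq := by
    simp only [hDp, hDq, Finset.mem_inter, Finset.mem_filter]; tauto
  have hunion : (Dp ∪ Dq).card ≤ 7 := by
    have h1 := Finset.card_union_add_card_inter Dp Dq
    have h2 : 1 ≤ (Dp ∩ Dq).card := Finset.card_pos.mpr ⟨b₀, hb₀⟩
    omega
  have hBc : B.card = 16 := card_blocks hTD
  have hsub : Dp ∪ Dq ⊆ B := Finset.union_subset (Finset.filter_subset _ _)
    (Finset.filter_subset _ _)
  have hS0 : 9 ≤ (B \ (Dp ∪ Dq)).card := by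
    rw [Finset.card_sdiff_of_subset hsub]; omega
  obtain ⟨S, hSsub, hScard⟩ := Finset.exists_subset_card_eq hS0
  refine ⟨S, fun b hb => (Finset.mem_sdiff.mp (hSsub hb)).1, hScard, ?_⟩
  have hpq : p ≠ q := fun hpq => Finset.disjoint_left.mp
    (hTD.groups_disjoint g₁ hg1 g₂ hg2 h12) hp (hpq ▸ hq)
  have hav : ∀ b ∈ S, ∀ x ∈ ({p, q} : Finset P), x ∉ b := by
    intro b hb x hx hxb
    have hbs := Finset.mem_sdiff.mp (hSsub hb)
    simp only [Finset.mem_insert, Finset.mem_singleton] at hx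
    apply hbs.2
    rcases hx with rfl | rfl
    · exact Finset.mem_union_left _ (Finset.mem_filter.mpr ⟨hbs.1, hxb⟩)
    · exact Finset.mem_union_right _ (Finset.mem_filter.mpr ⟨hbs.1, hxb⟩)
  have := sup_bound hTD hav
  rw [hTD.card_points, Finset.card_insert_of_notMem (by simpa using hpq),
    Finset.card_singleton] at this
  omega


lemma exists5 (hTD : IsTransversalDesign 3 5 Gr B) :
    ∃ S : Finset (Finset P), S ⊆ B ∧ S.card = 10 ∧ (S.sup id).card ≤ 11 := by
  classical
  obtain ⟨g₁, g₂, g₃, hg1, hg2, hg3, h12, h13, h23, hGr⟩ := groups_three hTD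
  have hg1c : g₁.card = 5 := hTD.group_card g₁ hg1
  have hg2c : g₂.card = 5 := hTD.group_card g₂ hg2
  have hg3c : g₃.card = 5 := hTD.group_card g₃ hg3
  obtain ⟨p₄, hp4, p₅, hp5, hp45⟩ := Finset.one_lt_card.mp (by omega : 1 < g₁.card)
  obtain ⟨q, hq⟩ := Finset.card_pos.mp (by omega : 0 < g₂.card)
  -- blocks through (p₄, q) and (p₅, q)
  obtain ⟨b₁, ⟨hb1B, hb1p, hb1q⟩, -⟩ := hTD.pairs_covered p₄ q g₁ hg1 g₂ hg2 h12 hp4 hq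
  obtain ⟨b₂, ⟨hb2B, hb2p, hb2q⟩, -⟩ := hTD.pairs_covered p₅ q g₁ hg1 g₂ hg2 h12 hp5 hq
  obtain ⟨s₁, hs1⟩ := Finset.card_eq_one.mp (hTD.block_meets_group b₁ hb1B g₃ hg3)
  obtain ⟨s₂, hs2⟩ := Finset.card_eq_one.mp (hTD.block_meets_group b₂ hb2B g₃ hg3)
  have hs1m := Finset.mem_inter.mp (hs1 ▸ Finset.mem_singleton_self s₁)
  have hs2m := Finset.mem_inter.mp (hs2 ▸ Finset.mem_singleton_self s₂)
  have hb12 : b₁ ≠ b₂ := by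
    intro hEq
    have : p₅ ∈ b₁ ∩ g₁ := Finset.mem_inter.mpr ⟨hEq ▸ hb2p, hp5⟩
    rw [inter_eq_singleton hTD hb1B hg1 hb1p hp4] at this
    exact hp45 (Finset.mem_singleton.mp this).symm
  have hs12 : s₁ ≠ s₂ := by
    intro hEq
    exact hb12 (block_unique hTD hb1B hb2B hg2 hg3 h23 hq hs1m.2 hb1q hs1m.1
      hb2q (hEq ▸ hs2m.1))
  -- pick t in g₃ off s₁, s₂
  have hst : ({s₁, s₂} : Finset P) ⊆ g₃ := by
    intro x hx
    simp only [Finset.mem_insert, Finset.mem_singleton] at hx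
    rcases hx with rfl | rfl
    exacts [hs1m.2, hs2m.2]
  obtain ⟨t, ht⟩ := Finset.card_pos.mp (by
    rw [Finset.card_sdiff_of_subset hst, hg3c,
      Finset.card_insert_of_notMem (by simpa using hs12), Finset.card_singleton]
    omega : 0 < (g₃ \ {s₁, s₂}).card)
  have htg3 : t ∈ g₃ := (Finset.mem_sdiff.mp ht).1
  have hts : t ≠ s₁ ∧ t ≠ s₂ := by
    have := (Finset.mem_sdiff.mp ht).2
    simp only [Finset.mem_insert, Finset.mem_singleton] at this
    tauto
  -- the four stars
  set D₄ := B.filter (fun b => p₄ ∈ b) with hD4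
  set D₅ := B.filter (fun b => p₅ ∈ b) with hD5
  set Dq := B.filter (fun b => q ∈ b) with hDq
  set Dt := B.filter (fun b => t ∈ b) with hDt
  have hD4c : D₄.card = 5 := card_through hTD hg1 hg2 h12 hp4
  have hD5c : D₅.card = 5 := card_through hTD hg1 hg2 h12 hp5
  have hDqc : Dq.card = 5 := card_through hTD hg2 hg1 (Ne.symm h12) hq
  have hDtc : Dt.card = 5 := card_through hTD hg3 hg1 (Ne.symm h13) htg3
  -- D₄ and D₅ are disjoint
  have hdisj45 : Disjoint D₄ D₅ := by
    rw [Finset.disjoint_left]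
    intro b hb4 hb5
    have hbB : b ∈ B := Finset.mem_filter.mp hb4 |>.1
    have h4 : p₄ ∈ b := (Finset.mem_filter.mp hb4).2
    have h5 : p₅ ∈ b := (Finset.mem_filter.mp hb5).2
    have : p₅ ∈ b ∩ g₁ := Finset.mem_inter.mpr ⟨h5, hp5⟩
    rw [inter_eq_singleton hTD hbB hg1 h4 hp4] at this
    exact hp45 (Finset.mem_singleton.mp this).symm
  set E₃ := D₄ ∪ D₅ with hE3
  have hE3c : E₃.card = 10 := by
    rw [hE3, Finset.card_union_of_disjoint hdisj45]; omega
  -- Dq meets E₃ in at least 2 blocks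
  have hqE : 2 ≤ (Dq ∩ E₃).card := by
    have hsub : ({b₁, b₂} : Finset (Finset P)) ⊆ Dq ∩ E₃ := by
      intro b hb
      simp only [Finset.mem_insert, Finset.mem_singleton] at hb
      rcases hb with rfl | rfl
      · exact Finset.mem_inter.mpr ⟨Finset.mem_filter.mpr ⟨hb1B, hb1q⟩,
          Finset.mem_union_left _ (Finset.mem_filter.mpr ⟨hb1B, hb1p⟩)⟩
      · exact Finset.mem_inter.mpr ⟨Finset.mem_filter.mpr ⟨hb2B, hb2q⟩,
          Finset.mem_union_right _ (Finset.mem_filter.mpr ⟨hb2B, hb2p⟩)⟩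
    calc 2 = ({b₁, b₂} : Finset (Finset P)).card := by
            rw [Finset.card_insert_of_notMem (by simpa using hb12)]; simp
    _ ≤ _ := Finset.card_le_card hsub
  set E₄ := E₃ ∪ Dq with hE4
  have hE4c : E₄.card ≤ 13 := by
    have h1 : (Dq \ E₃).card + (Dq ∩ E₃).card = Dq.card :=
      Finset.card_sdiff_add_card_inter Dq E₃
    have h2 : (Dq \ E₃).card + E₃.card = (Dq ∪ E₃).card :=
      Finset.card_sdiff_add_card Dq E₃
    rw [hE4, Finset.union_comm]
    omega
  -- three distinct blocks in Dt ∩ E₄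
  obtain ⟨c₄, ⟨hc4B, hc4p, hc4t⟩, -⟩ :=
    hTD.pairs_covered p₄ t g₁ hg1 g₃ hg3 h13 hp4 htg3
  obtain ⟨c₅, ⟨hc5B, hc5p, hc5t⟩, -⟩ :=
    hTD.pairs_covered p₅ t g₁ hg1 g₃ hg3 h13 hp5 htg3
  obtain ⟨cq, ⟨hcqB, hcqq, hcqt⟩, -⟩ :=
    hTD.pairs_covered q t g₂ hg2 g₃ hg3 h23 hq htg3
  have hc45 : c₄ ≠ c₅ := by
    intro hEq
    have : p₅ ∈ c₄ ∩ g₁ := Finset.mem_inter.mpr ⟨hEq ▸ hc5p, hp5⟩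
    rw [inter_eq_singleton hTD hc4B hg1 hc4p hp4] at this
    exact hp45 (Finset.mem_singleton.mp this).symm
  have hc4q : c₄ ≠ cq := by
    intro hEq
    have : c₄ = b₁ := block_unique hTD hc4B hb1B hg1 hg2 h12 hp4 hq hc4p
      (hEq ▸ hcqq) hb1p hb1q
    have : t ∈ b₁ ∩ g₃ := Finset.mem_inter.mpr ⟨this ▸ hc4t, htg3⟩
    rw [hs1] at this
    exact hts.1 (by simpa using this)
  have hc5q : c₅ ≠ cq := by
    intro hEq
    have : c₅ = b₂ := block_unique hTD hc5B hb2B hg1 hg2 h12 hp5 hq hc5p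
      (hEq ▸ hcqq) hb2p hb2q
    have : t ∈ b₂ ∩ g₃ := Finset.mem_inter.mpr ⟨this ▸ hc5t, htg3⟩
    rw [hs2] at this
    exact hts.2 (by simpa using this)
  have htE : 3 ≤ (Dt ∩ E₄).card := by
    have hsub : ({c₄, c₅, cq} : Finset (Finset P)) ⊆ Dt ∩ E₄ := by
      intro b hb
      simp only [Finset.mem_insert, Finset.mem_singleton] at hb
      rcases hb with rfl | rfl | rfl
      · exact Finset.mem_inter.mpr ⟨Finset.mem_filter.mpr ⟨hc4B, hc4t⟩,
          Finset.mem_union_left _ (Finset.mem_union_left _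
            (Finset.mem_filter.mpr ⟨hc4B, hc4p⟩))⟩
      · exact Finset.mem_inter.mpr ⟨Finset.mem_filter.mpr ⟨hc5B, hc5t⟩,
          Finset.mem_union_left _ (Finset.mem_union_right _
            (Finset.mem_filter.mpr ⟨hc5B, hc5p⟩))⟩
      · exact Finset.mem_inter.mpr ⟨Finset.mem_filter.mpr ⟨hcqB, hcqt⟩,
          Finset.mem_union_right _ (Finset.mem_filter.mpr ⟨hcqB, hcqq⟩)⟩
    calc 3 = ({c₄, c₅, cq} : Finset (Finset P)).card := by
            rw [Finset.card_insert_of_notMem (by simp [hc45, hc4q]),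
              Finset.card_insert_of_notMem (by simpa using hc5q)]
            simp
    _ ≤ _ := Finset.card_le_card hsub
  set U := E₄ ∪ Dt with hUdef
  have hUc : U.card ≤ 15 := by
    have h1 : (Dt \ E₄).card + (Dt ∩ E₄).card = Dt.card :=
      Finset.card_sdiff_add_card_inter Dt E₄
    have h2 : (Dt \ E₄).card + E₄.card = (Dt ∪ E₄).card :=
      Finset.card_sdiff_add_card Dt E₄
    rw [hUdef, Finset.union_comm]
    omega
  have hBc : B.card = 25 := card_blocks hTD
  have hUsub : U ⊆ B := by
    rw [hUdef, hE4, hE3]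
    exact Finset.union_subset (Finset.union_subset
      (Finset.union_subset (Finset.filter_subset _ _) (Finset.filter_subset _ _))
      (Finset.filter_subset _ _)) (Finset.filter_subset _ _)
  have hS0 : 10 ≤ (B \ U).card := by
    rw [Finset.card_sdiff_of_subset hUsub]; omega
  obtain ⟨S, hSsub, hScard⟩ := Finset.exists_subset_card_eq hS0
  refine ⟨S, fun b hb => (Finset.mem_sdiff.mp (hSsub hb)).1, hScard, ?_⟩
  -- distinctness of the four removed points
  have hne12 : ∀ x ∈ g₁, ∀ y ∈ g₂, x ≠ y := fun x hx y hy hxy =>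
    Finset.disjoint_left.mp (hTD.groups_disjoint g₁ hg1 g₂ hg2 h12) hx (hxy ▸ hy)
  have hne13 : ∀ x ∈ g₁, ∀ y ∈ g₃, x ≠ y := fun x hx y hy hxy =>
    Finset.disjoint_left.mp (hTD.groups_disjoint g₁ hg1 g₃ hg3 h13) hx (hxy ▸ hy)
  have hne23 : ∀ x ∈ g₂, ∀ y ∈ g₃, x ≠ y := fun x hx y hy hxy =>
    Finset.disjoint_left.mp (hTD.groups_disjoint g₂ hg2 g₃ hg3 h23) hx (hxy ▸ hy)
  have hF : ({p₄, p₅, q, t} : Finset P).card = 4 := by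
    rw [Finset.card_insert_of_notMem (by
        simp only [Finset.mem_insert, Finset.mem_singleton]
        push_neg
        exact ⟨hp45, hne12 p₄ hp4 q hq, hne13 p₄ hp4 t htg3⟩),
      Finset.card_insert_of_notMem (by
        simp only [Finset.mem_insert, Finset.mem_singleton]
        push_neg
        exact ⟨hne12 p₅ hp5 q hq, hne13 p₅ hp5 t htg3⟩),
      Finset.card_insert_of_notMem (by simpa using hne23 q hq t htg3)]
    simp
  have hav : ∀ b ∈ S, ∀ x ∈ ({p₄, p₅, q, t} : Finset P), x ∉ b := by
    intro b hb x hx hxb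
    have hbs := Finset.mem_sdiff.mp (hSsub hb)
    simp only [Finset.mem_insert, Finset.mem_singleton] at hx
    apply hbs.2
    rw [hUdef, hE4, hE3]
    rcases hx with rfl | rfl | rfl | rfl
    · exact Finset.mem_union_left _ (Finset.mem_union_left _
        (Finset.mem_union_left _ (Finset.mem_filter.mpr ⟨hbs.1, hxb⟩)))
    · exact Finset.mem_union_left _ (Finset.mem_union_left _
        (Finset.mem_union_right _ (Finset.mem_filter.mpr ⟨hbs.1, hxb⟩)))
    · exact Finset.mem_union_left _ (Finset.mem_union_right _
        (Finset.mem_filter.mpr ⟨hbs.1, hxb⟩))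
    · exact Finset.mem_union_right _ (Finset.mem_filter.mpr ⟨hbs.1, hxb⟩)
  have := sup_bound hTD hav
  rw [hTD.card_points, hF] at this
  omega

end TDaux

/-- For a `TD(3,5)`: any `i` distinct blocks, `1 ≤ i ≤ 9`, cover at least
`i + 2` points, and there exist `10` distinct blocks covering at most `11`
points.  Likewise, for a `TD(3,4)`: any `i` distinct blocks, `1 ≤ i ≤ 8`,
cover at least `i + 2` points, and there exist `9` distinct blocks covering
at most `10` points. -/
theorem td3_small_ecbc_batch_parameters
    {P₁ : Type*} [Fintype P₁] [DecidableEq P₁]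
    (Gr₁ B₁ : Finset (Finset P₁)) (hTD₁ : IsTransversalDesign 3 5 Gr₁ B₁)
    {P₂ : Type*} [Fintype P₂] [DecidableEq P₂]
    (Gr₂ B₂ : Finset (Finset P₂)) (hTD₂ : IsTransversalDesign 3 4 Gr₂ B₂) :
    ((∀ S : Finset (Finset P₁), S ⊆ B₁ → 1 ≤ S.card → S.card ≤ 9 →
        S.card + 2 ≤ (S.sup id).card) ∧
      (∃ S : Finset (Finset P₁), S ⊆ B₁ ∧ S.card = 10 ∧
        (S.sup id).card ≤ 11)) ∧
    ((∀ S : Finset (Finset P₂), S ⊆ B₂ → 1 ≤ S.card → S.card ≤ 8 →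
        S.card + 2 ≤ (S.sup id).card) ∧
      (∃ S : Finset (Finset P₂), S ⊆ B₂ ∧ S.card = 9 ∧
        (S.sup id).card ≤ 10)) := by
  exact ⟨⟨TDaux.lower_bound hTD₁ 9 TDaux.arith5, TDaux.exists5 hTD₁⟩,
    ⟨TDaux.lower_bound hTD₂ 8 TDaux.arith4, TDaux.exists4 hTD₂⟩⟩
end
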